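/- arXiv:2005.01023 — 2 statements merged into one kernel-verified Lean document; each statement's English description precedes it below -/
import Mathlib

section
/- Let 0 < p < ∞. Then there exists a function f : ℂ → ℂ holomorphic on the open unit disc D = {z ∈ ℂ : |z| < 1} such that f belongs to H^p, i.e. sup_{0<r<1} ∫_0^{2π} |f(r e^{iθ})|^p dθ < ∞, and for every real q with p < q < ∞ and all real numbers a < b one has sup_{0<r<1} ∫_a^b |f(r e^{iθ})|^q dθ = ∞; that is, f belongs to no localized Hardy space H^q_{[a,b]}(D) with q > p. -/
open scoped ENNReal Real
open Complex MeasureTheory Set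

/-- `∫_a^b |f(r e^{iθ})|^e dθ`, as a Lebesgue integral with values in `[0, ∞]`. -/
noncomputable def hardyArcIntegral (f : ℂ → ℂ) (e a b r : ℝ) : ℝ≥0∞ :=
  ∫⁻ θ in Ioc a b, ENNReal.ofReal (‖f ((r : ℂ) * Complex.exp (θ * Complex.I))‖ ^ e)

set_option maxHeartbeats 1000000

namespace HPX

noncomputable def γn (n : ℕ) : ℝ := 1 - 1/(n+2)
noncomputable def κn (n : ℕ) : ℝ := Real.sin (π / (2*(n+2)))
noncomputable def cn (n : ℕ) : ℝ := κn n * (1/2)^n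
noncomputable def θn (n : ℕ) : ℝ := ((Denumerable.ofNat ℚ (Nat.unpair n).2 : ℚ) : ℝ)
noncomputable def wn (n : ℕ) (z : ℂ) : ℂ := 1 - Complex.exp (-(θn n : ℂ) * Complex.I) * z
noncomputable def termF (n : ℕ) (z : ℂ) : ℂ := Complex.exp (-(γn n : ℂ) * Complex.log (wn n z))
noncomputable def gF (z : ℂ) : ℂ := ∑' n, (cn n : ℂ) * termF n z
noncomputable def fF (p : ℝ) (z : ℂ) : ℂ := Complex.exp ((p⁻¹ : ℂ) * Complex.log (gF z))

namespace Complex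

noncomputable def abs : AbsoluteValue ℂ ℝ where
  toFun z := ‖z‖
  map_mul' := norm_mul
  nonneg' := norm_nonneg
  eq_zero' _ := norm_eq_zero
  add_le' := norm_add_le

theorem norm_eq_abs (z : ℂ) : ‖z‖ = abs z := rfl

theorem abs_exp (z : ℂ) : abs (_root_.Complex.exp z) = Real.exp z.re := _root_.Complex.norm_exp z

theorem abs_ofReal (x : ℝ) : abs (x : ℂ) = |x| := _root_.Complex.norm_real x

theorem abs_I : abs _root_.Complex.I = 1 := _root_.Complex.norm_I

theorem re_le_abs (z : ℂ) : z.re ≤ abs z := _root_.Complex.re_le_norm z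

theorem abs_exp_sub_one_le {x : ℂ} (hx : abs x ≤ 1) :
    abs (_root_.Complex.exp x - 1) ≤ 2 * abs x := _root_.Complex.norm_exp_sub_one_le hx

end Complex



lemma γn_pos (n : ℕ) : 0 < γn n := by
  have h2 : (0:ℝ) < n + 2 := by positivity
  have : (1:ℝ)/(n+2) < 1 := by
    rw [div_lt_one h2]; linarith [Nat.cast_nonneg (α := ℝ) n]
  simp only [γn]; linarith

lemma γn_lt_one (n : ℕ) : γn n < 1 := by
  have h2 : (0:ℝ) < n + 2 := by positivity
  have : (0:ℝ) < 1/(n+2) := by positivity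
  simp only [γn]; linarith

lemma κn_pos (n : ℕ) : 0 < κn n := by
  have h2 : (1:ℝ) ≤ (n:ℝ) + 2 := by linarith [Nat.cast_nonneg (α := ℝ) n]
  have hπ : 0 < π := Real.pi_pos
  apply Real.sin_pos_of_pos_of_lt_pi
  · positivity
  · calc π / (2*((n:ℝ)+2)) ≤ π / 2 := by
          apply div_le_div_of_nonneg_left hπ.le (by norm_num)
          nlinarith
      _ < π := by linarith

lemma κn_le_one (n : ℕ) : κn n ≤ 1 := Real.sin_le_one _

lemma cn_pos (n : ℕ) : 0 < cn n := by
  have := κn_pos n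
  have h : (0:ℝ) < (1/2)^n := by positivity
  exact mul_pos this h

lemma cn_le (n : ℕ) : cn n ≤ (1/2)^n := by
  have h := κn_le_one n
  have : (0:ℝ) ≤ (1/2:ℝ)^n := by positivity
  calc cn n = κn n * (1/2)^n := rfl
    _ ≤ 1 * (1/2)^n := by nlinarith [κn_pos n]
    _ = (1/2)^n := one_mul _

lemma abs_an (n : ℕ) : Complex.abs (Complex.exp (-(θn n : ℂ) * Complex.I)) = 1 := by
  rw [Complex.abs_exp]
  have : (-(θn n : ℂ) * Complex.I).re = 0 := by simp
  rw [this, Real.exp_zero]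

lemma wn_re_pos {n : ℕ} {z : ℂ} (hz : Complex.abs z < 1) : 0 < (wn n z).re := by
  have h1 : (wn n z).re = 1 - (Complex.exp (-(θn n : ℂ) * Complex.I) * z).re := by
    simp [wn]
  have h2 : (Complex.exp (-(θn n : ℂ) * Complex.I) * z).re ≤
      Complex.abs (Complex.exp (-(θn n : ℂ) * Complex.I) * z) := Complex.re_le_abs _
  rw [map_mul, abs_an, one_mul] at h2
  rw [h1]; linarith

lemma wn_ne {n : ℕ} {z : ℂ} (hz : Complex.abs z < 1) : wn n z ≠ 0 := by
  intro h
  have := wn_re_pos (n := n) hz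
  rw [h] at this; simp at this

lemma wn_slit {n : ℕ} {z : ℂ} (hz : Complex.abs z < 1) : wn n z ∈ Complex.slitPlane :=
  Or.inl (wn_re_pos hz)

lemma abs_wn_le {n : ℕ} {z : ℂ} : Complex.abs (wn n z) ≤ 1 + Complex.abs z := by
  calc Complex.abs (wn n z) ≤ Complex.abs 1 + Complex.abs (Complex.exp (-(θn n : ℂ) * Complex.I) * z) := by
        simpa [wn, sub_eq_add_neg] using Complex.abs.add_le 1 (-(Complex.exp (-(θn n : ℂ) * Complex.I) * z))
    _ = 1 + Complex.abs z := by rw [map_one, map_mul, abs_an, one_mul]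

lemma one_sub_abs_le_abs_wn {n : ℕ} {z : ℂ} : 1 - Complex.abs z ≤ Complex.abs (wn n z) := by
  have := norm_sub_norm_le (1:ℂ) (Complex.exp (-(θn n : ℂ) * Complex.I) * z)
  simp only [Complex.norm_eq_abs, map_one, map_mul, abs_an, one_mul] at this
  simpa [wn] using this

lemma abs_termF {n : ℕ} {z : ℂ} (hz : Complex.abs z < 1) :
    Complex.abs (termF n z) = Complex.abs (wn n z) ^ (-(γn n)) := by
  rw [termF, Complex.abs_exp]
  have hre : (-(γn n : ℂ) * Complex.log (wn n z)).re = -(γn n) * Real.log (Complex.abs (wn n z)) := by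
    have : (-(γn n : ℂ)) = ((-(γn n) : ℝ) : ℂ) := by push_cast; ring
    rw [this, Complex.re_ofReal_mul, Complex.log_re]; rfl
  rw [hre, Real.rpow_def_of_pos (Complex.abs.pos (wn_ne hz)), mul_comm]



-- assume previous lemmas; here test re_termF lower bound


lemma γn_mul_pi : ∀ n : ℕ, γn n * (π/2) = π/2 - π/(2*((n:ℝ)+2)) := by
  intro n
  have h2 : ((n:ℝ)+2) ≠ 0 := by positivity
  simp only [γn]
  field_simp

lemma re_termF {n : ℕ} {z : ℂ} (hz : Complex.abs z < 1) :
    κn n * Complex.abs (termF n z) ≤ (termF n z).re := by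
  have harg : |Complex.arg (wn n z)| < π/2 :=
    Complex.abs_arg_lt_pi_div_two_iff.2 (Or.inl (wn_re_pos hz))
  have him : (-(γn n : ℂ) * Complex.log (wn n z)).im = -(γn n) * Complex.arg (wn n z) := by
    have : (-(γn n : ℂ)) = ((-(γn n) : ℝ) : ℂ) := by push_cast; ring
    rw [this, Complex.im_ofReal_mul, Complex.log_im]
  have hre : (termF n z).re
      = Complex.abs (termF n z) * Real.cos (-(γn n) * Complex.arg (wn n z)) := by
    rw [termF, Complex.exp_re, Complex.abs_exp, him]
  rw [hre]
  have hγ0 := γn_pos n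
  have hγ1 := γn_lt_one n
  have hcos : Real.cos (γn n * (π/2)) ≤ Real.cos (-(γn n) * Complex.arg (wn n z)) := by
    rw [← Real.cos_abs (-(γn n) * Complex.arg (wn n z))]
    apply Real.cos_le_cos_of_nonneg_of_le_pi (abs_nonneg _)
    · have := Real.pi_pos; nlinarith
    · have : |(-(γn n)) * Complex.arg (wn n z)| = γn n * |Complex.arg (wn n z)| := by
        rw [abs_mul, abs_neg, abs_of_pos hγ0]
      rw [this]
      nlinarith
  have hκ : κn n ≤ Real.cos (-(γn n) * Complex.arg (wn n z)) := by
    refine le_trans ?_ hcos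
    rw [γn_mul_pi n, Real.cos_pi_div_two_sub]
    norm_num [κn]
  have habs : 0 ≤ Complex.abs (termF n z) := Complex.abs.nonneg _
  nlinarith

lemma re_termF_pos {n : ℕ} {z : ℂ} (hz : Complex.abs z < 1) : 0 < (termF n z).re := by
  have h1 := re_termF (n := n) hz
  have h2 : 0 < Complex.abs (termF n z) := by
    rw [abs_termF hz]
    exact Real.rpow_pos_of_pos (Complex.abs.pos (wn_ne hz)) _
  have hκ : 0 < κn n := by
    apply Real.sin_pos_of_pos_of_lt_pi
    · positivity
    · have hπ := Real.pi_pos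
      have h2' : (1:ℝ) ≤ (n:ℝ) + 2 := by linarith [Nat.cast_nonneg (α := ℝ) n]
      calc π / (2*((n:ℝ)+2)) ≤ π / 2 := by
            apply div_le_div_of_nonneg_left hπ.le (by norm_num); nlinarith
        _ < π := by linarith
  nlinarith

-- bound on disc of radius ρ
lemma abs_termF_le {n : ℕ} {z : ℂ} {ρ : ℝ} (hρ : ρ < 1) (hρ0 : 0 ≤ ρ)
    (hz : Complex.abs z ≤ ρ) :
    Complex.abs (termF n z) ≤ (1-ρ)⁻¹ := by
  have hz1 : Complex.abs z < 1 := lt_of_le_of_lt hz hρ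
  have hwpos : 0 < Complex.abs (wn n z) := Complex.abs.pos (wn_ne hz1)
  have hδ : (0:ℝ) < 1 - ρ := by linarith
  have hw : 1 - ρ ≤ Complex.abs (wn n z) := by
    have h := one_sub_abs_le_abs_wn (n := n) (z := z)
    linarith
  rw [abs_termF hz1]
  have hpow : 1 - ρ ≤ Complex.abs (wn n z) ^ (γn n) := by
    rcases le_or_gt 1 (Complex.abs (wn n z)) with h1 | h1
    · calc 1 - ρ ≤ 1 := by linarith
        _ = (1:ℝ) ^ (γn n) := (Real.one_rpow _).symm
        _ ≤ Complex.abs (wn n z) ^ (γn n) := Real.rpow_le_rpow zero_le_one h1 (γn_pos n).le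
    · calc 1 - ρ ≤ Complex.abs (wn n z) := hw
        _ = Complex.abs (wn n z) ^ (1:ℝ) := (Real.rpow_one _).symm
        _ ≤ Complex.abs (wn n z) ^ (γn n) :=
          Real.rpow_le_rpow_of_exponent_ge hwpos h1.le (γn_lt_one n).le
  rw [Real.rpow_neg hwpos.le]
  exact inv_anti₀ hδ hpow

lemma termF_differentiableAt {n : ℕ} {z : ℂ} (hz : Complex.abs z < 1) :
    DifferentiableAt ℂ (termF n) z := by
  have hw : DifferentiableAt ℂ (wn n) z := by
    exact show DifferentiableAt ℂ (fun z => 1 - Complex.exp (-(θn n : ℂ) * Complex.I) * z) z by fun_prop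
  have hlog : DifferentiableAt ℂ (fun z => Complex.log (wn n z)) z :=
    hw.clog (Or.inl (wn_re_pos hz))
  exact ((hlog.const_mul _).cexp)

lemma termF_continuousAt {n : ℕ} {z : ℂ} (hz : Complex.abs z < 1) :
    ContinuousAt (termF n) z := (termF_differentiableAt hz).continuousAt





lemma summable_halves : Summable (fun n : ℕ => (1/2:ℝ)^n) :=
  summable_geometric_of_lt_one (by norm_num) (by norm_num)

lemma norm_cn_termF_le {n : ℕ} {z : ℂ} {ρ : ℝ} (hρ : ρ < 1) (hρ0 : 0 ≤ ρ)
    (hz : Complex.abs z ≤ ρ) :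
    ‖(cn n : ℂ) * termF n z‖ ≤ (1/2)^n * (1-ρ)⁻¹ := by
  rw [norm_mul, Complex.norm_eq_abs, Complex.norm_eq_abs, Complex.abs_ofReal,
    abs_of_pos (cn_pos n)]
  have h1 := abs_termF_le (n := n) hρ hρ0 hz
  have h2 := cn_le n
  have h3 : (0:ℝ) ≤ Complex.abs (termF n z) := Complex.abs.nonneg _
  have h4 : (0:ℝ) < (1-ρ)⁻¹ := by
    have : (0:ℝ) < 1 - ρ := by linarith
    positivity
  have h5 : (0:ℝ) < cn n := cn_pos n
  nlinarith

lemma summable_main {z : ℂ} (hz : Complex.abs z < 1) :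
    Summable (fun n => (cn n : ℂ) * termF n z) := by
  apply Summable.of_norm
  apply Summable.of_nonneg_of_le (fun n => norm_nonneg _)
    (fun n => norm_cn_termF_le hz (Complex.abs.nonneg z) (le_refl _))
  exact summable_halves.mul_right _

lemma gF_diff : DifferentiableOn ℂ gF (Metric.ball (0:ℂ) 1) := by
  intro z hz
  rw [Metric.mem_ball, dist_zero_right, Complex.norm_eq_abs] at hz
  set ρ : ℝ := (1 + Complex.abs z)/2 with hρdef
  have hρ0 : 0 ≤ ρ := by positivity
  have hρ1 : ρ < 1 := by simp only [hρdef]; linarith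
  have hzρ : Complex.abs z < ρ := by simp only [hρdef]; linarith [Complex.abs.nonneg z]
  have hdiff : DifferentiableOn ℂ gF (Metric.ball (0:ℂ) ρ) := by
    apply differentiableOn_tsum_of_summable_norm
      (u := fun n => (1/2:ℝ)^n * (1-ρ)⁻¹)
    · exact summable_halves.mul_right _
    · intro i
      intro x hx
      rw [Metric.mem_ball, dist_zero_right, Complex.norm_eq_abs] at hx
      exact ((termF_differentiableAt (lt_trans hx hρ1)).const_mul _).differentiableWithinAt
    · exact Metric.isOpen_ball
    · intro i x hx
      rw [Metric.mem_ball, dist_zero_right, Complex.norm_eq_abs] at hx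
      exact norm_cn_termF_le hρ1 hρ0 hx.le
  have hzin : z ∈ Metric.ball (0:ℂ) ρ := by
    rw [Metric.mem_ball, dist_zero_right, Complex.norm_eq_abs]; exact hzρ
  exact ((hdiff.differentiableAt (Metric.isOpen_ball.mem_nhds hzin))).differentiableWithinAt

lemma summable_re {z : ℂ} (hz : Complex.abs z < 1) :
    Summable (fun n => ((cn n : ℂ) * termF n z).re) :=
  (Complex.hasSum_re (summable_main hz).hasSum).summable

lemma re_cn_termF (n : ℕ) (z : ℂ) : ((cn n : ℂ) * termF n z).re = cn n * (termF n z).re :=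
  Complex.re_ofReal_mul _ _

lemma gF_re_ge (n : ℕ) {z : ℂ} (hz : Complex.abs z < 1) :
    cn n * (termF n z).re ≤ (gF z).re := by
  rw [gF, Complex.re_tsum (summable_main hz)]
  have := Summable.le_tsum (summable_re hz) n (fun m _ => by
    rw [re_cn_termF]; exact mul_nonneg (cn_pos m).le (re_termF_pos hz).le)
  rwa [re_cn_termF] at this

lemma gF_re_pos {z : ℂ} (hz : Complex.abs z < 1) : 0 < (gF z).re :=
  lt_of_lt_of_le (mul_pos (cn_pos 0) (re_termF_pos hz)) (gF_re_ge 0 hz)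

lemma gF_slit {z : ℂ} (hz : Complex.abs z < 1) : gF z ∈ Complex.slitPlane :=
  Or.inl (gF_re_pos hz)

lemma gF_ne {z : ℂ} (hz : Complex.abs z < 1) : gF z ≠ 0 := by
  intro h
  have := gF_re_pos hz
  rw [h] at this; simp at this

lemma fF_diff (p : ℝ) : DifferentiableOn ℂ (fF p) (Metric.ball (0:ℂ) 1) := by
  intro z hz
  have hz' : Complex.abs z < 1 := by
    rwa [Metric.mem_ball, dist_zero_right, Complex.norm_eq_abs] at hz
  have hg : DifferentiableAt ℂ gF z :=
    gF_diff.differentiableAt (Metric.isOpen_ball.mem_nhds hz)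
  exact (((hg.clog (gF_slit hz')).const_mul _).cexp).differentiableWithinAt

lemma abs_fF {p : ℝ} {z : ℂ} (hz : Complex.abs z < 1) :
    Complex.abs (fF p z) = Complex.abs (gF z) ^ (p⁻¹) := by
  rw [fF, Complex.abs_exp]
  have : ((p⁻¹ : ℂ) * Complex.log (gF z)).re = p⁻¹ * Real.log (Complex.abs (gF z)) := by
    have hc : ((p⁻¹ : ℝ) : ℂ) = (p⁻¹ : ℂ) := by push_cast; rfl
    rw [← hc, Complex.re_ofReal_mul, Complex.log_re]; rfl
  rw [this, Real.rpow_def_of_pos (Complex.abs.pos (gF_ne hz)), mul_comm]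

lemma abs_fF_rpow {p : ℝ} (hp : p ≠ 0) {z : ℂ} (hz : Complex.abs z < 1) (e : ℝ) :
    Complex.abs (fF p z) ^ e = Complex.abs (gF z) ^ (e / p) := by
  rw [abs_fF hz, ← Real.rpow_mul (Complex.abs.nonneg _)]
  congr 1
  field_simp





lemma termF_zero (n : ℕ) : termF n 0 = 1 := by
  simp [termF, wn]

lemma abs_circle {r θ : ℝ} (hr0 : 0 ≤ r) : Complex.abs ((r:ℂ) * Complex.exp (θ * Complex.I)) = r := by
  rw [map_mul, Complex.abs_ofReal, _root_.abs_of_nonneg hr0, Complex.abs_exp]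
  simp [Complex.mul_I_re]

lemma circleMap_eq (r θ : ℝ) : circleMap 0 r θ = (r:ℂ) * Complex.exp (θ * Complex.I) := by
  simp [circleMap]

lemma termF_cont_circle (n : ℕ) {r : ℝ} (hr : r ∈ Ioo (0:ℝ) 1) :
    Continuous (fun θ : ℝ => termF n ((r:ℂ) * Complex.exp (θ * Complex.I))) := by
  rw [continuous_iff_continuousAt]
  intro θ
  have hc : ContinuousAt (fun θ : ℝ => (r:ℂ) * Complex.exp (θ * Complex.I)) θ := by fun_prop
  exact (termF_differentiableAt (by rw [abs_circle hr.1.le]; exact hr.2)).continuousAt.comp hc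

lemma termF_integral_circle (n : ℕ) {r : ℝ} (hr : r ∈ Ioo (0:ℝ) 1) :
    ∫ θ in (0:ℝ)..(2*π), termF n (circleMap 0 r θ) = 2*π := by
  have hball : DiffContOnCl ℂ (termF n) (Metric.ball (0:ℂ) r) := by
    apply DifferentiableOn.diffContOnCl
    rw [closure_ball (0:ℂ) hr.1.ne']
    intro z hz
    rw [Metric.mem_closedBall, dist_zero_right, Complex.norm_eq_abs] at hz
    exact (termF_differentiableAt (lt_of_le_of_lt hz hr.2)).differentiableWithinAt
  have h0 : (0:ℂ) ∈ Metric.ball (0:ℂ) r := by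
    rw [Metric.mem_ball, dist_self]; exact hr.1
  have key := hball.circleIntegral_sub_inv_smul h0
  unfold circleIntegral at key
  have hcongr : (∫ θ in (0:ℝ)..(2*π),
        deriv (circleMap 0 r) θ • (fun z => (z - 0)⁻¹ • termF n z) (circleMap 0 r θ))
      = ∫ θ in (0:ℝ)..(2*π), Complex.I * termF n (circleMap 0 r θ) := by
    apply intervalIntegral.integral_congr
    intro θ _
    have hne : circleMap 0 r θ ≠ 0 := circleMap_ne_center hr.1.ne'
    simp only [deriv_circleMap, smul_eq_mul, sub_zero]
    field_simp
  rw [hcongr, termF_zero, smul_eq_mul, mul_one, intervalIntegral.integral_const_mul] at key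
  have := mul_left_cancel₀ Complex.I_ne_zero (by rw [key]; ring :
    Complex.I * ∫ θ in (0:ℝ)..(2*π), termF n (circleMap 0 r θ) = Complex.I * (2*π : ℂ))
  rw [this]

lemma integrable_termF_circle (n : ℕ) {r : ℝ} (hr : r ∈ Ioo (0:ℝ) 1) :
    IntegrableOn (fun θ : ℝ => termF n ((r:ℂ) * Complex.exp (θ * Complex.I)))
      (Ioc 0 (2*π)) volume := by
  apply ((termF_cont_circle n hr).continuousOn.integrableOn_compact isCompact_Icc).mono_set
    Ioc_subset_Icc_self

lemma integral_re_termF (n : ℕ) {r : ℝ} (hr : r ∈ Ioo (0:ℝ) 1) :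
    ∫ θ in Ioc (0:ℝ) (2*π), (termF n ((r:ℂ) * Complex.exp (θ * Complex.I))).re = 2*π := by
  have h1 := termF_integral_circle n hr
  have h2π : (0:ℝ) ≤ 2*π := by positivity
  rw [intervalIntegral.integral_of_le h2π] at h1
  simp only [circleMap_eq] at h1
  have h3 := integral_re (μ := volume.restrict (Ioc (0:ℝ) (2*π))) (integrable_termF_circle n hr)
  simp only [RCLike.re_to_complex] at h3
  rw [h3, h1]
  norm_num

lemma lintegral_re_termF (n : ℕ) {r : ℝ} (hr : r ∈ Ioo (0:ℝ) 1) :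
    ∫⁻ θ in Ioc (0:ℝ) (2*π), ENNReal.ofReal ((termF n ((r:ℂ) * Complex.exp (θ * Complex.I))).re)
      = ENNReal.ofReal (2*π) := by
  have hre : Integrable (fun θ : ℝ => (termF n ((r:ℂ) * Complex.exp (θ * Complex.I))).re)
      (volume.restrict (Ioc (0:ℝ) (2*π))) := by
    have := (integrable_termF_circle n hr).re
    simpa [RCLike.re_to_complex] using this
  rw [← MeasureTheory.ofReal_integral_eq_lintegral_ofReal hre]
  · rw [integral_re_termF n hr]
  · apply Filter.Eventually.of_forall
    intro θ
    exact (re_termF_pos (by rw [abs_circle hr.1.le]; exact hr.2)).le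






lemma summable_re_bound {z : ℂ} (hz : Complex.abs z < 1) :
    Summable (fun n => (1/2:ℝ)^n * (termF n z).re) := by
  apply Summable.of_nonneg_of_le
    (fun n => mul_nonneg (by positivity) (re_termF_pos hz).le)
    (fun n => ?_) (summable_halves.mul_right (1 - Complex.abs z)⁻¹)
  have h1 : (termF n z).re ≤ Complex.abs (termF n z) := Complex.re_le_abs _
  have h2 : Complex.abs (termF n z) ≤ (1 - Complex.abs z)⁻¹ :=
    abs_termF_le hz (Complex.abs.nonneg z) (le_refl _)
  have : (0:ℝ) ≤ (1/2:ℝ)^n := by positivity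
  nlinarith

lemma abs_gF_le {z : ℂ} (hz : Complex.abs z < 1) :
    Complex.abs (gF z) ≤ ∑' n, (1/2:ℝ)^n * (termF n z).re := by
  have h1 : Complex.abs (gF z) ≤ ∑' n, ‖(cn n : ℂ) * termF n z‖ := by
    rw [← Complex.norm_eq_abs]
    exact norm_tsum_le_tsum_norm (summable_main hz).norm
  refine le_trans h1 (Summable.tsum_le_tsum (fun n => ?_) (summable_main hz).norm (summable_re_bound hz))
  rw [norm_mul, Complex.norm_eq_abs, Complex.norm_eq_abs, Complex.abs_ofReal,
    _root_.abs_of_pos (cn_pos n)]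
  calc cn n * Complex.abs (termF n z) ≤ (1/2:ℝ)^n * (κn n * Complex.abs (termF n z)) := by
        have h := cn_le n
        have h2 : (0:ℝ) ≤ Complex.abs (termF n z) := Complex.abs.nonneg _
        have : cn n = κn n * (1/2)^n := rfl
        rw [this]; ring_nf; rfl
    _ ≤ (1/2:ℝ)^n * (termF n z).re := by
        have := re_termF (n := n) hz
        have h3 : (0:ℝ) ≤ (1/2:ℝ)^n := by positivity
        nlinarith

lemma hardy_upper {p : ℝ} (hp : 0 < p) {r : ℝ} (hr : r ∈ Ioo (0:ℝ) 1) :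
    hardyArcIntegral (fF p) p 0 (2*π) r ≤ ENNReal.ofReal (4*π) := by
  have hzr : ∀ θ : ℝ, Complex.abs ((r:ℂ) * Complex.exp (θ * Complex.I)) < 1 := fun θ => by
    rw [abs_circle hr.1.le]; exact hr.2
  have step1 : hardyArcIntegral (fF p) p 0 (2*π) r
      ≤ ∫⁻ θ in Ioc (0:ℝ) (2*π),
          ∑' n, ENNReal.ofReal ((1/2:ℝ)^n * (termF n ((r:ℂ) * Complex.exp (θ * Complex.I))).re) := by
    apply lintegral_mono
    intro θ
    show ENNReal.ofReal (‖fF p ((r:ℂ) * Complex.exp (θ * Complex.I))‖ ^ p) ≤ _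
    set z := (r:ℂ) * Complex.exp (θ * Complex.I) with hzdef
    have h0 : ‖fF p z‖ ^ p = Complex.abs (gF z) := by
      rw [Complex.norm_eq_abs, abs_fF_rpow hp.ne' (hzr θ), div_self hp.ne', Real.rpow_one]
    show ENNReal.ofReal (‖fF p z‖ ^ p) ≤ ∑' n, ENNReal.ofReal ((1/2:ℝ)^n * (termF n z).re)
    rw [h0]
    calc ENNReal.ofReal (Complex.abs (gF z))
        ≤ ENNReal.ofReal (∑' n, (1/2:ℝ)^n * (termF n z).re) :=
          ENNReal.ofReal_le_ofReal (abs_gF_le (hzr θ))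
      _ = ∑' n, ENNReal.ofReal ((1/2:ℝ)^n * (termF n z).re) :=
          ENNReal.ofReal_tsum_of_nonneg
            (fun n => mul_nonneg (by positivity) (re_termF_pos (hzr θ)).le)
            (summable_re_bound (hzr θ))
  have step2 : (∫⁻ θ in Ioc (0:ℝ) (2*π),
      ∑' n, ENNReal.ofReal ((1/2:ℝ)^n * (termF n ((r:ℂ) * Complex.exp (θ * Complex.I))).re))
      = ∑' n, ∫⁻ θ in Ioc (0:ℝ) (2*π),
          ENNReal.ofReal ((1/2:ℝ)^n * (termF n ((r:ℂ) * Complex.exp (θ * Complex.I))).re) := by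
    apply lintegral_tsum
    intro n
    apply Continuous.aemeasurable
    exact ENNReal.continuous_ofReal.comp ((continuous_const.mul
      ((Complex.continuous_re.comp (termF_cont_circle n hr)))))
  have step3 : ∀ n : ℕ, (∫⁻ θ in Ioc (0:ℝ) (2*π),
      ENNReal.ofReal ((1/2:ℝ)^n * (termF n ((r:ℂ) * Complex.exp (θ * Complex.I))).re))
      = ENNReal.ofReal ((1/2:ℝ)^n) * ENNReal.ofReal (2*π) := by
    intro n
    have : ∀ θ : ℝ, ENNReal.ofReal ((1/2:ℝ)^n * (termF n ((r:ℂ) * Complex.exp (θ * Complex.I))).re)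
        = ENNReal.ofReal ((1/2:ℝ)^n) * ENNReal.ofReal ((termF n ((r:ℂ) * Complex.exp (θ * Complex.I))).re) :=
      fun θ => ENNReal.ofReal_mul (by positivity)
    simp_rw [this]
    rw [lintegral_const_mul, lintegral_re_termF n hr]
    exact (ENNReal.continuous_ofReal.comp
      ((Complex.continuous_re.comp (termF_cont_circle n hr)))).measurable
  calc hardyArcIntegral (fF p) p 0 (2*π) r
      ≤ ∑' n, ∫⁻ θ in Ioc (0:ℝ) (2*π),
          ENNReal.ofReal ((1/2:ℝ)^n * (termF n ((r:ℂ) * Complex.exp (θ * Complex.I))).re) := by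
        rw [← step2]; exact step1
    _ = ∑' n : ℕ, ENNReal.ofReal ((1/2:ℝ)^n) * ENNReal.ofReal (2*π) := by
        exact tsum_congr step3
    _ = (∑' n : ℕ, ENNReal.ofReal ((1/2:ℝ)^n)) * ENNReal.ofReal (2*π) := ENNReal.tsum_mul_right
    _ = ENNReal.ofReal 2 * ENNReal.ofReal (2*π) := by
        rw [← ENNReal.ofReal_tsum_of_nonneg (fun n => by positivity) summable_halves,
          tsum_geometric_two]
    _ = ENNReal.ofReal (4*π) := by
        rw [← ENNReal.ofReal_mul (by norm_num)]
        ring_nf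






lemma exists_n (v : ℚ) (N : ℕ) : ∃ n : ℕ, N ≤ n ∧ θn n = (v:ℝ) := by
  obtain ⟨m, hm⟩ : ∃ m, Denumerable.ofNat ℚ m = v := ⟨_, Denumerable.ofNat_encode v⟩
  refine ⟨Nat.pair N m, Nat.left_le_pair _ _, ?_⟩
  unfold θn
  rw [Nat.unpair_pair, show (N, m).2 = m from rfl, hm]

lemma fF_cont_circle (p : ℝ) {r : ℝ} (hr : r ∈ Ioo (0:ℝ) 1) (e : ℝ) (he : 0 ≤ e) :
    Continuous (fun θ : ℝ => ENNReal.ofReal (‖fF p ((r:ℂ) * Complex.exp (θ * Complex.I))‖ ^ e)) := by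
  rw [continuous_iff_continuousAt]
  intro θ
  have hz : Complex.abs ((r:ℂ) * Complex.exp (θ * Complex.I)) < 1 := by
    rw [abs_circle hr.1.le]; exact hr.2
  have hzmem : ((r:ℂ) * Complex.exp (θ * Complex.I)) ∈ Metric.ball (0:ℂ) 1 := by
    rw [Metric.mem_ball, dist_zero_right, Complex.norm_eq_abs]; exact hz
  have hcirc : ContinuousAt (fun θ : ℝ => (r:ℂ) * Complex.exp (θ * Complex.I)) θ := by fun_prop
  have hg : ContinuousAt gF ((r:ℂ) * Complex.exp (θ * Complex.I)) :=
    (gF_diff.differentiableAt (Metric.isOpen_ball.mem_nhds hzmem)).continuousAt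
  have hfF : ContinuousAt (fF p) ((r:ℂ) * Complex.exp (θ * Complex.I)) := by
    apply ContinuousAt.cexp
    exact (hg.clog (gF_slit hz)).const_mul _
  have h0 : ContinuousAt (fun θ : ℝ => fF p ((r:ℂ) * Complex.exp (θ * Complex.I))) θ :=
    ContinuousAt.comp (x := θ)
      (f := fun θ : ℝ => (r:ℂ) * Complex.exp (θ * Complex.I)) hfF hcirc
  have h1 : ContinuousAt (fun θ : ℝ => ‖fF p ((r:ℂ) * Complex.exp (θ * Complex.I))‖) θ := h0.norm
  have h2 : ContinuousAt (fun x : ℝ => x ^ e) (‖fF p ((r:ℂ) * Complex.exp (θ * Complex.I))‖) :=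
    Real.continuousAt_rpow_const _ _ (Or.inr he)
  exact ContinuousAt.comp (x := θ)
    (f := fun θ : ℝ => ‖fF p ((r:ℂ) * Complex.exp (θ * Complex.I))‖ ^ e)
    (ENNReal.continuous_ofReal.continuousAt)
    (ContinuousAt.comp (x := θ)
      (f := fun θ : ℝ => ‖fF p ((r:ℂ) * Complex.exp (θ * Complex.I))‖) h2 h1)

lemma hardy_lower {p : ℝ} (hp : 0 < p) {q : ℝ} (hq : p < q) {a b : ℝ} (hab : a < b)
    (R : ℝ) (hR : 0 < R) :
    ∃ r ∈ Ioo (0:ℝ) 1, ENNReal.ofReal R ≤ hardyArcIntegral (fF p) q a b r := by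
  -- setup
  set s : ℝ := q / p with hsdef
  have hs : 1 < s := (one_lt_div hp).2 hq
  have hs0 : 0 < s := by linarith
  obtain ⟨v, hav, hvb⟩ := exists_rat_btwn hab
  obtain ⟨n, hnN, hθv⟩ := exists_n v ⌈s/(s-1)⌉₊
  have hceil : s/(s-1) ≤ (⌈s/(s-1)⌉₊ : ℝ) := Nat.le_ceil _
  have hn2 : s/(s-1) < (n:ℝ) + 2 := by
    have : (⌈s/(s-1)⌉₊:ℝ) ≤ (n:ℝ) := by exact_mod_cast hnN
    linarith
  have hβ : 1 < γn n * s := by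
    have hγdef : γn n = 1 - 1/((n:ℝ)+2) := by simp [γn]
    have hn2pos : (0:ℝ) < (n:ℝ)+2 := by positivity
    have hs1 : 0 < s - 1 := by linarith
    have h1 : s < ((n:ℝ)+2) * (s-1) := by
      rw [div_lt_iff₀ hs1] at hn2; linarith
    have h3 : s/((n:ℝ)+2) < s - 1 := by
      rw [div_lt_iff₀ hn2pos]; nlinarith
    have h2 : (1 - 1/((n:ℝ)+2)) * s = s - s/((n:ℝ)+2) := by field_simp
    rw [hγdef, h2]
    linarith
  set γ : ℝ := γn n with hγdef2
  have hγ0 : 0 < γ := γn_pos n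
  set β : ℝ := γ * s with hβdef
  have hβ1 : 1 < β := hβ
  set C : ℝ := (cn n * κn n) ^ s with hCdef
  have hC : 0 < C := Real.rpow_pos_of_pos (mul_pos (cn_pos n) (κn_pos n)) _
  set X : ℝ := (C/(3*R)) ^ (β-1)⁻¹ with hXdef
  have hX : 0 < X := Real.rpow_pos_of_pos (by positivity) _
  set ε : ℝ := min (min (1/2) (b - v)) (X/3) with hεdef
  have hε0 : 0 < ε := by
    apply lt_min (lt_min (by norm_num) (by linarith)) (by positivity)
  have hε12 : ε ≤ 1/2 := le_trans (min_le_left _ _) (min_le_left _ _)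
  have hεb : ε ≤ b - v := le_trans (min_le_left _ _) (min_le_right _ _)
  have hεX : 3*ε ≤ X := by
    have := min_le_right (min (1/2) (b - (v:ℝ))) (X/3)
    linarith
  set r : ℝ := 1 - ε with hrdef
  have hr : r ∈ Ioo (0:ℝ) 1 := ⟨by simp only [hrdef]; linarith, by simp only [hrdef]; linarith⟩
  refine ⟨r, hr, ?_⟩
  -- pointwise bound on Ioc v (v+ε)
  have hpoint : ∀ θ ∈ Ioc (v:ℝ) (v+ε),
      ENNReal.ofReal (C * (3*ε) ^ (-β))
        ≤ ENNReal.ofReal (‖fF p ((r:ℂ) * Complex.exp (θ * Complex.I))‖ ^ q) := by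
    intro θ hθ
    set z : ℂ := (r:ℂ) * Complex.exp (θ * Complex.I) with hzdef
    have hz : Complex.abs z < 1 := by rw [hzdef, abs_circle hr.1.le]; exact hr.2
    apply ENNReal.ofReal_le_ofReal
    -- rewrite the norm
    have h0 : ‖fF p z‖ ^ q = Complex.abs (gF z) ^ s := by
      rw [Complex.norm_eq_abs, abs_fF_rpow hp.ne' hz q]
    rw [h0]
    -- |w| ≤ 3ε
    have ht0 : 0 < θ - v := by linarith [hθ.1]
    have ht1 : θ - v ≤ ε := by linarith [hθ.2]
    have hwz : wn n z = 1 - (r:ℂ) * Complex.exp ((θ - v : ℝ) * Complex.I) := by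
      rw [wn, hθv, hzdef]
      congr 1
      rw [← mul_assoc, mul_comm (Complex.exp _) ((r:ℂ)), mul_assoc, ← Complex.exp_add]
      congr 2
      push_cast
      ring
    have habsw : Complex.abs (wn n z) ≤ 3*ε := by
      rw [hwz]
      have hsplit : (1 : ℂ) - (r:ℂ) * Complex.exp ((θ - v : ℝ) * Complex.I)
          = ((1 - r : ℝ) : ℂ) + (r:ℂ) * (1 - Complex.exp ((θ - v : ℝ) * Complex.I)) := by
        push_cast; ring
      rw [hsplit]
      calc Complex.abs _ ≤ Complex.abs ((1 - r : ℝ) : ℂ)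
            + Complex.abs ((r:ℂ) * (1 - Complex.exp ((θ - v : ℝ) * Complex.I))) :=
          Complex.abs.add_le _ _
        _ ≤ ε + 1 * (2 * (θ - v)) := by
            apply add_le_add
            · rw [Complex.abs_ofReal, hrdef]
              rw [_root_.abs_of_nonneg (by linarith)]
              linarith
            · rw [map_mul]
              apply mul_le_mul
              · rw [Complex.abs_ofReal, _root_.abs_of_nonneg (by linarith [hr.1.le])]
                exact hr.2.le
              · have habsarg : Complex.abs ((θ - v : ℝ) * Complex.I) = θ - v := by
                  rw [map_mul, Complex.abs_I, Complex.abs_ofReal, mul_one,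
                    _root_.abs_of_pos ht0]
                have h2 : Complex.abs (Complex.exp ((θ - v : ℝ) * Complex.I) - 1)
                    ≤ 2 * Complex.abs ((θ - v : ℝ) * Complex.I) := by
                  apply Complex.abs_exp_sub_one_le
                  rw [habsarg]; linarith
                rw [habsarg] at h2
                calc Complex.abs (1 - Complex.exp ((θ - v : ℝ) * Complex.I))
                    = Complex.abs (Complex.exp ((θ - v : ℝ) * Complex.I) - 1) := by
                      rw [← Complex.abs.map_neg]; congr 1; ring
                  _ ≤ 2 * (θ - v) := h2
              · exact Complex.abs.nonneg _
              · exact zero_le_one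
        _ ≤ 3*ε := by linarith
    -- |termF| ≥ (3ε)^(-γ)
    have h3ε : (0:ℝ) < 3*ε := by linarith
    have hterm : (3*ε) ^ (-γ) ≤ Complex.abs (termF n z) := by
      rw [abs_termF hz, Real.rpow_neg h3ε.le, Real.rpow_neg (Complex.abs.nonneg _)]
      apply inv_anti₀ (Real.rpow_pos_of_pos (Complex.abs.pos (wn_ne hz)) _)
      exact Real.rpow_le_rpow (Complex.abs.nonneg _) habsw hγ0.le
    -- |gF| ≥ cn·κn·(3ε)^(-γ)
    have hgabs : cn n * κn n * (3*ε) ^ (-γ) ≤ Complex.abs (gF z) := by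
      have h1 : κn n * Complex.abs (termF n z) ≤ (termF n z).re := re_termF hz
      have h2 : cn n * (termF n z).re ≤ (gF z).re := gF_re_ge n hz
      have h3 : (gF z).re ≤ Complex.abs (gF z) := Complex.re_le_abs _
      have h4 : κn n * ((3*ε) ^ (-γ)) ≤ κn n * Complex.abs (termF n z) :=
        mul_le_mul_of_nonneg_left hterm (κn_pos n).le
      calc cn n * κn n * (3*ε) ^ (-γ) = cn n * (κn n * (3*ε) ^ (-γ)) := by ring
        _ ≤ cn n * (κn n * Complex.abs (termF n z)) :=
            mul_le_mul_of_nonneg_left h4 (cn_pos n).le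
        _ ≤ cn n * (termF n z).re := mul_le_mul_of_nonneg_left h1 (cn_pos n).le
        _ ≤ (gF z).re := h2
        _ ≤ Complex.abs (gF z) := h3
    -- conclude
    calc C * (3*ε) ^ (-β)
        = (cn n * κn n) ^ s * ((3*ε) ^ (-γ)) ^ s := by
          rw [← Real.rpow_mul h3ε.le, neg_mul]
      _ = (cn n * κn n * (3*ε) ^ (-γ)) ^ s :=
          (Real.mul_rpow (mul_pos (cn_pos n) (κn_pos n)).le
            (Real.rpow_pos_of_pos h3ε _).le).symm
      _ ≤ Complex.abs (gF z) ^ s :=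
          Real.rpow_le_rpow (mul_nonneg (mul_nonneg (cn_pos n).le (κn_pos n).le)
            (Real.rpow_pos_of_pos h3ε _).le) hgabs hs0.le
  -- integral assembly
  have h3ε : (0:ℝ) < 3*ε := by linarith
  have hsub : Ioc (v:ℝ) (v+ε) ⊆ Ioc a b := by
    apply Ioc_subset_Ioc <;> linarith
  have hR_le : R ≤ C * (3*ε) ^ (-β) * ε := by
    have hXβ : X ^ (β-1) = C/(3*R) := by
      rw [hXdef, ← Real.rpow_mul (by positivity), inv_mul_cancel₀ (by linarith : β - 1 ≠ 0),
        Real.rpow_one]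
    have h3εβ1 : (3*ε) ^ (β-1) ≤ C/(3*R) := by
      rw [← hXβ]
      exact Real.rpow_le_rpow h3ε.le hεX (by linarith)
    have hsplit : (3*ε) ^ β = (3*ε) ^ (β-1) * (3*ε) := by
      conv_lhs => rw [show β = (β-1)+1 by ring]
      rw [Real.rpow_add h3ε, Real.rpow_one]
    have hβpos : (0:ℝ) < (3*ε) ^ β := Real.rpow_pos_of_pos h3ε _
    have hkey : R * (3*ε) ^ β ≤ C * ε := by
      rw [hsplit]
      have h1 : R * ((3*ε) ^ (β-1) * (3*ε)) = ((3*ε) ^ (β-1)) * (R * (3*ε)) := by ring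
      rw [h1]
      calc ((3*ε) ^ (β-1)) * (R * (3*ε)) ≤ (C/(3*R)) * (R * (3*ε)) := by
            apply mul_le_mul_of_nonneg_right h3εβ1 (by positivity)
        _ = C * ε := by field_simp
    rw [Real.rpow_neg h3ε.le, ← sub_nonneg]
    have h2 : C * ((3*ε) ^ β)⁻¹ * ε - R = (C * ε - R * (3*ε)^β) / (3*ε)^β := by
      field_simp
    rw [h2]
    exact div_nonneg (by linarith) hβpos.le
  calc ENNReal.ofReal R ≤ ENNReal.ofReal (C * (3*ε) ^ (-β) * ε) := ENNReal.ofReal_le_ofReal hR_le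
    _ = ENNReal.ofReal (C * (3*ε) ^ (-β)) * volume (Ioc (v:ℝ) (v+ε)) := by
        rw [Real.volume_Ioc, add_sub_cancel_left, ENNReal.ofReal_mul]
        have : (0:ℝ) < C * (3*ε) ^ (-β) := mul_pos hC (Real.rpow_pos_of_pos h3ε _)
        positivity
    _ = ∫⁻ _ in Ioc (v:ℝ) (v+ε), ENNReal.ofReal (C * (3*ε) ^ (-β)) := by
        rw [setLIntegral_const]
    _ ≤ ∫⁻ θ in Ioc (v:ℝ) (v+ε),
          ENNReal.ofReal (‖fF p ((r:ℂ) * Complex.exp (θ * Complex.I))‖ ^ q) := by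
        apply setLIntegral_mono ((fF_cont_circle p hr q (by linarith)).measurable) hpoint
    _ ≤ hardyArcIntegral (fF p) q a b r := lintegral_mono_set hsub


end HPX

/-- Let `0 < p < ∞`. There is a function `f`, holomorphic on the open
unit disc, which belongs to `H^p` but belongs to no localized Hardy space
`H^q_{[a,b]}(D)` with `p < q < ∞`. -/
theorem exists_in_Hp_not_in_any_localized_Hq (p : ℝ) (hp : 0 < p) :
    ∃ f : ℂ → ℂ,
      DifferentiableOn ℂ f (Metric.ball (0 : ℂ) 1) ∧
      (⨆ r ∈ Ioo (0 : ℝ) 1, hardyArcIntegral f p 0 (2 * π) r) < ⊤ ∧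
      (∀ q : ℝ, p < q → ∀ a b : ℝ, a < b →
        (⨆ r ∈ Ioo (0 : ℝ) 1, hardyArcIntegral f q a b r) = ⊤) := by
  refine ⟨HPX.fF p, HPX.fF_diff p, ?_, ?_⟩
  · exact lt_of_le_of_lt (iSup₂_le fun r hr => HPX.hardy_upper hp hr) ENNReal.ofReal_lt_top
  · intro q hq a b hab
    by_contra hne
    set S := ⨆ r ∈ Ioo (0:ℝ) 1, hardyArcIntegral (HPX.fF p) q a b r with hS
    obtain ⟨r, hr, hle⟩ := HPX.hardy_lower hp hq hab (S.toReal + 1)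
      (by positivity)
    have h1 : hardyArcIntegral (HPX.fF p) q a b r ≤ S :=
      le_iSup₂ (f := fun r (_ : r ∈ Ioo (0:ℝ) 1) => hardyArcIntegral (HPX.fF p) q a b r) r hr
    have h2 : ENNReal.ofReal (S.toReal + 1) ≤ S := le_trans hle h1
    have h3 : S < ENNReal.ofReal (S.toReal + 1) := by
      conv_lhs => rw [← ENNReal.ofReal_toReal hne]
      exact (ENNReal.ofReal_lt_ofReal_iff (by positivity)).2
        (by linarith [ENNReal.toReal_nonneg (a := S)])
    exact absurd h2 (not_le.2 h3)
end

section
/- Let 0 < p ≤ q < ∞ and let a < b be real numbers. Then there exists a sequence of functions g_n : ℂ → ℂ (n ∈ ℕ), each holomorphic on the open unit disc D = {z ∈ ℂ : |z| < 1}, such that for every N ∈ ℕ and all complex scalars λ_0, …, λ_N with λ_N ≠ 0, the linear combination L = λ_0 g_0 + ⋯ + λ_N g_N satisfies: (1) for every real β with 0 < β < p, sup_{0<r<1} ∫_0^{2π} |L(r e^{iθ})|^β dθ < ∞, and (2) sup_{0<r<1} ∫_a^b |L(r e^{iθ})|^q dθ = ∞. In particular the ℂ-linear span of {g_n} is an infinite-dimensional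 vector space F with F \ {0} ⊆ (⋂_{β<p} H^β) \ H^q_{[a,b]}(D). -/
open scoped ENNReal Real
open Complex MeasureTheory Set

lemma circ_normSq (r θ θ₀ : ℝ) :
    ‖(r:ℂ) * Complex.exp (θ*Complex.I) - Complex.exp (θ₀*Complex.I)‖^2
      = (1-r)^2 + 2*r*(1 - Real.cos (θ - θ₀)) := by
  rw [Complex.sq_norm, Complex.normSq_apply]
  simp only [Complex.sub_re, Complex.sub_im, Complex.mul_re, Complex.mul_im,
    Complex.ofReal_re, Complex.ofReal_im, Complex.exp_ofReal_mul_I_re,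
    Complex.exp_ofReal_mul_I_im, Real.cos_sub, zero_mul, sub_zero, zero_add]
  linear_combination (r^2) * Real.sin_sq_add_cos_sq θ + Real.sin_sq_add_cos_sq θ₀

-- upper bound on distance to singular point
lemma circ_dist_le (r θ θ₀ : ℝ) (hr : r ≤ 1) :
    ‖(r:ℂ) * Complex.exp (θ*Complex.I) - Complex.exp (θ₀*Complex.I)‖
      ≤ (1 - r) + |θ - θ₀| := by
  have h1 : (0:ℝ) ≤ 1 - r := by linarith
  have h2 : ‖(r:ℂ) * Complex.exp (θ*Complex.I) - Complex.exp (θ₀*Complex.I)‖^2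
      ≤ ((1-r) + |θ - θ₀|)^2 := by
    rw [circ_normSq]
    have hc : 1 - Real.cos (θ - θ₀) ≤ (θ - θ₀)^2 / 2 := by
      nlinarith [Real.one_sub_sq_div_two_le_cos (x := θ - θ₀)]
    have : 2*r*(1 - Real.cos (θ-θ₀)) ≤ (θ-θ₀)^2 := by
      nlinarith [Real.cos_le_one (θ - θ₀), Real.neg_one_le_cos (θ - θ₀)]
    have habs : |θ - θ₀|^2 = (θ-θ₀)^2 := sq_abs _
    nlinarith [abs_nonneg (θ - θ₀)]
  nlinarith [norm_nonneg ((r:ℂ) * Complex.exp (θ*Complex.I) - Complex.exp (θ₀*Complex.I)),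
    abs_nonneg (θ - θ₀)]

-- lower bound via 1 - cos
lemma circ_dist_sq_ge (r θ θ₀ : ℝ) (hr0 : 0 ≤ r) (hr1 : r ≤ 1) :
    min ((1-r)^2) (1 - Real.cos (θ - θ₀))
      ≤ ‖(r:ℂ) * Complex.exp (θ*Complex.I) - Complex.exp (θ₀*Complex.I)‖^2 := by
  rw [circ_normSq]
  rcases le_total r (1/2) with h | h
  · have : (1/2:ℝ)^2 ≤ (1-r)^2 := by nlinarith
    have hcos := Real.cos_le_one (θ - θ₀)
    calc min ((1-r)^2) (1 - Real.cos (θ-θ₀)) ≤ (1-r)^2 := min_le_left _ _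
      _ ≤ (1-r)^2 + 2*r*(1 - Real.cos (θ-θ₀)) := by nlinarith
  · have hcos := Real.cos_le_one (θ - θ₀)
    calc min ((1-r)^2) (1 - Real.cos (θ-θ₀)) ≤ 1 - Real.cos (θ-θ₀) := min_le_right _ _
      _ ≤ (1-r)^2 + 2*r*(1 - Real.cos (θ-θ₀)) := by nlinarith

noncomputable def gfun (s θ₀ : ℝ) (z : ℂ) : ℂ :=
  (1 - Complex.exp ((-θ₀ : ℝ) * Complex.I) * z) ^ ((-s : ℝ) : ℂ)

lemma base_re_pos (θ₀ : ℝ) {z : ℂ} (hz : ‖z‖ < 1) :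
    0 < (1 - Complex.exp ((-θ₀ : ℝ) * Complex.I) * z).re := by
  have h1 : ‖Complex.exp ((-θ₀ : ℝ) * Complex.I) * z‖ < 1 := by
    rw [norm_mul, Complex.norm_exp_ofReal_mul_I, one_mul]
    exact hz
  have h2 := Complex.re_le_norm (Complex.exp ((-θ₀ : ℝ) * Complex.I) * z)
  simp only [Complex.sub_re, Complex.one_re]
  linarith

lemma gfun_diff (s θ₀ : ℝ) : DifferentiableOn ℂ (gfun s θ₀) (Metric.ball (0 : ℂ) 1) := by
  intro z hz
  have hz' : ‖z‖ < 1 := by simpa [Metric.mem_ball, Complex.dist_eq] using hz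
  refine DifferentiableAt.differentiableWithinAt ?_
  apply DifferentiableAt.cpow
  · exact (differentiableAt_const _).sub ((differentiableAt_const _).mul differentiableAt_id)
  · exact differentiableAt_const _
  · exact Complex.mem_slitPlane_iff.2 (Or.inl (base_re_pos θ₀ hz'))

lemma gfun_norm (s θ₀ : ℝ) {z : ℂ} (hz : ‖z‖ < 1) :
    ‖gfun s θ₀ z‖ = ‖z - Complex.exp ((θ₀ : ℝ) * Complex.I)‖ ^ (-s : ℝ) := by
  have hpos := base_re_pos θ₀ hz
  have hne : (1 - Complex.exp ((-θ₀ : ℝ) * Complex.I) * z) ≠ 0 := by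
    intro h; rw [h] at hpos; simp at hpos
  rw [gfun, Complex.norm_cpow_of_ne_zero hne]
  simp only [Complex.ofReal_re, Complex.ofReal_im, zero_mul, mul_zero, Real.exp_zero, div_one]
  congr 1
  have : 1 - Complex.exp ((-θ₀ : ℝ) * Complex.I) * z
      = Complex.exp ((-θ₀ : ℝ) * Complex.I) * (Complex.exp ((θ₀ : ℝ) * Complex.I) - z) := by
    rw [mul_sub, ← Complex.exp_add]
    have : ((-θ₀ : ℝ) : ℂ) * Complex.I + (θ₀ : ℝ) * Complex.I = 0 := by push_cast; ring
    rw [this, Complex.exp_zero]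
  rw [this]
  rw [norm_mul, Complex.norm_exp_ofReal_mul_I, one_mul]
  exact norm_sub_rev (Complex.exp ((θ₀ : ℝ) * Complex.I)) z

-- translation for set lintegrals
lemma lint_shift (f : ℝ → ℝ≥0∞) (a b c : ℝ) :
    ∫⁻ θ in Ioc a b, f (θ - c) = ∫⁻ u in Ioc (a - c) (b - c), f u := by
  have hmp : MeasurePreserving (fun θ : ℝ => θ + (-c)) volume volume :=
    measurePreserving_add_right volume (-c)
  have hemb : MeasurableEmbedding (fun θ : ℝ => θ + (-c)) :=
    (Homeomorph.addRight (-c)).measurableEmbedding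
  have hpre : (fun θ : ℝ => θ + (-c)) ⁻¹' (Ioc (a - c) (b - c)) = Ioc a b := by
    ext x; simp only [mem_preimage, mem_Ioc]
    constructor <;> rintro ⟨h1, h2⟩ <;> exact ⟨by linarith, by linarith⟩
  calc ∫⁻ θ in Ioc a b, f (θ - c)
      = ∫⁻ θ in (fun θ : ℝ => θ + (-c)) ⁻¹' (Ioc (a - c) (b - c)), f (θ + (-c)) := by
        rw [hpre]; simp_rw [sub_eq_add_neg]
    _ = ∫⁻ u in Ioc (a - c) (b - c), f u :=
        hmp.setLIntegral_comp_preimage_emb hemb f _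

lemma measurable_rpow_const_abs (α : ℝ) (hα : α ≠ 0) :
    Measurable (fun u : ℝ => ENNReal.ofReal (|u| ^ (-α))) := by
  have heq : (fun u : ℝ => |u| ^ (-α))
      = Set.piecewise ({0} : Set ℝ) (fun _ => (0:ℝ))
        (fun u => Real.exp (Real.log |u| * (-α))) := by
    funext u
    by_cases hu : u = 0
    · simp [hu, Real.zero_rpow (neg_ne_zero.2 hα)]
    · rw [Set.piecewise_eq_of_notMem _ _ _ (by simpa using hu),
        Real.rpow_def_of_pos (abs_pos.2 hu)]
  apply ENNReal.measurable_ofReal.comp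
  rw [heq]
  exact Measurable.piecewise (measurableSet_singleton 0) measurable_const
    (Real.measurable_exp.comp ((Real.measurable_log.comp measurable_abs).mul measurable_const))

-- finiteness of the model integral
lemma J_lt_top {α : ℝ} (hα1 : α < 1) (T : ℝ) :
    ∫⁻ v in Ioc (0:ℝ) T, ENNReal.ofReal (v ^ (-α)) < ⊤ := by
  rcases le_total T 0 with hT | hT
  · rw [Ioc_eq_empty (by simpa using hT), Measure.restrict_empty, lintegral_zero_measure]
    exact ENNReal.zero_lt_top
  · have hii : IntervalIntegrable (fun x : ℝ => x ^ (-α)) volume 0 T :=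
      intervalIntegral.intervalIntegrable_rpow' (by linarith)
    have hint : IntegrableOn (fun x : ℝ => x ^ (-α)) (Ioc 0 T) volume := by
      rw [intervalIntegrable_iff, uIoc_of_le hT] at hii; exact hii
    have hnn : 0 ≤ᵐ[volume.restrict (Ioc (0:ℝ) T)] fun x : ℝ => x ^ (-α) :=
      (ae_restrict_iff' measurableSet_Ioc).2 (ae_of_all _ fun v hv => Real.rpow_nonneg hv.1.le _)
    rw [← ofReal_integral_eq_lintegral_ofReal hint hnn]
    exact ENNReal.ofReal_lt_top

lemma K_lt_top {α : ℝ} (hα0 : 0 < α) (hα1 : α < 1) (T : ℝ) :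
    ∫⁻ u in Ioc (-T) T, ENNReal.ofReal (|u| ^ (-α)) < ⊤ := by
  rcases le_total T 0 with hT | hT
  · rw [Ioc_eq_empty (by intro h; linarith [h]), Measure.restrict_empty, lintegral_zero_measure]
    exact ENNReal.zero_lt_top
  have hsplit : Ioc (-T) T = Ioc (-T) 0 ∪ Ioc 0 T := (Ioc_union_Ioc_eq_Ioc (by linarith) hT).symm
  rw [hsplit]
  refine lt_of_le_of_lt (lintegral_union_le _ _ _) ?_
  have h2 : ∫⁻ u in Ioc (0:ℝ) T, ENNReal.ofReal (|u| ^ (-α))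
      = ∫⁻ u in Ioc (0:ℝ) T, ENNReal.ofReal (u ^ (-α)) := by
    apply setLIntegral_congr_fun measurableSet_Ioc
    exact fun u hu => by rw [abs_of_pos hu.1]
  have h1 : ∫⁻ u in Ioc (-T) (0:ℝ), ENNReal.ofReal (|u| ^ (-α))
      = ∫⁻ u in Ico (0:ℝ) T, ENNReal.ofReal (|u| ^ (-α)) := by
    have hmp : MeasurePreserving (fun θ : ℝ => -θ) volume volume :=
      Measure.measurePreserving_neg volume
    have hemb : MeasurableEmbedding (fun θ : ℝ => -θ) :=
      (Homeomorph.neg ℝ).measurableEmbedding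
    have hpre : (fun θ : ℝ => -θ) ⁻¹' (Ico (0:ℝ) T) = Ioc (-T) 0 := by
      ext x; simp only [mem_preimage, mem_Ico, mem_Ioc]
      constructor <;> rintro ⟨h1, h2⟩ <;> exact ⟨by linarith, by linarith⟩
    calc ∫⁻ u in Ioc (-T) (0:ℝ), ENNReal.ofReal (|u| ^ (-α))
        = ∫⁻ u in (fun θ : ℝ => -θ) ⁻¹' (Ico (0:ℝ) T),
            ENNReal.ofReal (|-u| ^ (-α)) := by rw [hpre]; simp_rw [abs_neg]
      _ = ∫⁻ u in Ico (0:ℝ) T, ENNReal.ofReal (|u| ^ (-α)) := by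
          exact hmp.setLIntegral_comp_preimage_emb hemb
            (fun u => ENNReal.ofReal (|u| ^ (-α))) (Ico 0 T)
  have h1' : ∫⁻ u in Ico (0:ℝ) T, ENNReal.ofReal (|u| ^ (-α))
      = ∫⁻ u in Ioc (0:ℝ) T, ENNReal.ofReal (|u| ^ (-α)) := by
    rw [Measure.restrict_congr_set Ico_ae_eq_Ioc]
  rw [h1, h1', h2]
  exact ENNReal.add_lt_top.2 ⟨J_lt_top hα1 T, J_lt_top hα1 T⟩

lemma one_sub_cos_ge {u : ℝ} (hu : |u| ≤ 2*π) :
    2/π^2 * (min |u| (min |u - 2*π| |u + 2*π|))^2 ≤ 1 - Real.cos u := by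
  have hπ := Real.pi_pos
  set d := min |u| (min |u - 2*π| |u + 2*π|) with hd
  have hd0 : 0 ≤ d := le_min (abs_nonneg _) (le_min (abs_nonneg _) (abs_nonneg _))
  have hcpos : (0:ℝ) ≤ 2/π^2 := by positivity
  rcases le_total |u| π with h | h
  · have h1 := Real.cos_le_one_sub_mul_cos_sq h
    have h2 : d^2 ≤ u^2 := by
      rw [← _root_.sq_abs u]; exact pow_le_pow_left₀ hd0 (min_le_left _ _) 2
    have h3 := mul_le_mul_of_nonneg_left h2 hcpos
    linarith
  · rcases le_or_gt 0 u with hu0 | hu0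
    · have hua : |u| = u := _root_.abs_of_nonneg hu0
      have hv : |u - 2*π| ≤ π := by
        rw [_root_.abs_of_nonpos (by rw [hua] at hu; linarith)]
        rw [hua] at h; linarith
      have h1 := Real.cos_le_one_sub_mul_cos_sq hv
      rw [Real.cos_sub_two_pi] at h1
      have h2 : d^2 ≤ (u - 2*π)^2 := by
        rw [← _root_.sq_abs (u - 2*π)]
        exact pow_le_pow_left₀ hd0 (le_trans (min_le_right _ _) (min_le_left _ _)) 2
      have h3 := mul_le_mul_of_nonneg_left h2 hcpos
      linarith
    · have hua : |u| = -u := abs_of_neg hu0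
      have hv : |u + 2*π| ≤ π := by
        rw [_root_.abs_of_nonneg (by rw [hua] at hu; linarith)]
        rw [hua] at h; linarith
      have h1 := Real.cos_le_one_sub_mul_cos_sq hv
      rw [Real.cos_add_two_pi] at h1
      have h2 : d^2 ≤ (u + 2*π)^2 := by
        rw [← _root_.sq_abs (u + 2*π)]
        exact pow_le_pow_left₀ hd0 (le_trans (min_le_right _ _) (min_le_right _ _)) 2
      have h3 := mul_le_mul_of_nonneg_left h2 hcpos
      linarith

lemma circ_dist_ge_half {r θ θ₀ : ℝ} (hr : 1/2 ≤ r) (hr1 : r ≤ 1) (hu : |θ - θ₀| ≤ 2*π) :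
    (min |θ - θ₀| (min |θ - θ₀ - 2*π| |θ - θ₀ + 2*π|)) / π
      ≤ ‖(r:ℂ) * Complex.exp (θ*Complex.I) - Complex.exp (θ₀*Complex.I)‖ := by
  have hπ := Real.pi_pos
  set d := min |θ - θ₀| (min |θ - θ₀ - 2*π| |θ - θ₀ + 2*π|) with hd
  have hd0 : 0 ≤ d := le_min (abs_nonneg _) (le_min (abs_nonneg _) (abs_nonneg _))
  have h1 := one_sub_cos_ge hu
  have h2 := circ_normSq r θ θ₀
  have hN := norm_nonneg ((r:ℂ) * Complex.exp (θ*Complex.I) - Complex.exp (θ₀*Complex.I))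
  have hsq : (d/π)^2 ≤ ‖(r:ℂ) * Complex.exp (θ*Complex.I) - Complex.exp (θ₀*Complex.I)‖^2 := by
    rw [h2, div_pow]
    have hcos := Real.cos_le_one (θ - θ₀)
    have : d^2/π^2 ≤ 2/π^2 * d^2 := by
      have he : d^2/π^2 = 1/π^2 * d^2 := by ring
      rw [he]
      exact mul_le_mul_of_nonneg_right
        ((div_le_div_iff_of_pos_right (by positivity)).2 one_le_two) (sq_nonneg d)
    nlinarith [sq_nonneg (1 - r)]
  nlinarith [sq_nonneg (‖(r:ℂ) * Complex.exp (θ*Complex.I) - Complex.exp (θ₀*Complex.I)‖ - d/π),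
    div_nonneg hd0 hπ.le]

lemma lemmaA {α : ℝ} (hα0 : 0 < α) (hα1 : α < 1) :
    ∃ M : ℝ≥0∞, M < ⊤ ∧ ∀ (θ₀ r : ℝ), 0 ≤ r → r < 1 →
      ∫⁻ θ in Ioc 0 (2*π), ENNReal.ofReal
        (‖(r:ℂ) * Complex.exp (θ * Complex.I) - Complex.exp (θ₀ * Complex.I)‖ ^ (-α)) ≤ M := by
  have hπ := Real.pi_pos
  set K := ∫⁻ u in Ioc (-(4*π)) (4*π), ENNReal.ofReal (|u| ^ (-α)) with hK
  refine ⟨ENNReal.ofReal 2 * ENNReal.ofReal (2*π) + ENNReal.ofReal π * (K + K + K), ?_, ?_⟩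
  · have hKt := K_lt_top hα0 hα1 (4*π)
    exact ENNReal.add_lt_top.2 ⟨ENNReal.mul_lt_top ENNReal.ofReal_lt_top ENNReal.ofReal_lt_top,
      ENNReal.mul_lt_top ENNReal.ofReal_lt_top
        (ENNReal.add_lt_top.2 ⟨ENNReal.add_lt_top.2 ⟨hKt, hKt⟩, hKt⟩)⟩
  intro θ₀ r hr0 hr1
  -- reduce θ₀ mod 2π
  set φ := 2*π*Int.fract (θ₀/(2*π)) with hφ
  have hφ0 : 0 ≤ φ := mul_nonneg (by linarith) (Int.fract_nonneg _)
  have hφ2 : φ < 2*π := by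
    have := Int.fract_lt_one (θ₀/(2*π))
    calc φ < 2*π*1 := by rw [hφ]; exact (mul_lt_mul_iff_right₀ (by linarith)).2 this
    _ = 2*π := mul_one _
  have hexp : Complex.exp ((θ₀:ℝ) * Complex.I) = Complex.exp ((φ:ℝ) * Complex.I) := by
    have hθφ : θ₀ = φ + 2*π*(⌊θ₀/(2*π)⌋ : ℤ) := by
      rw [hφ, Int.fract]
      field_simp
      ring
    rw [hθφ]
    push_cast
    rw [add_mul, Complex.exp_add]
    have : ((2:ℂ)*π*(⌊θ₀/(2*π)⌋ : ℤ)) * Complex.I = (⌊θ₀/(2*π)⌋ : ℤ) * (2*π*Complex.I) := by ring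
    rw [this, Complex.exp_int_mul_two_pi_mul_I, mul_one]
  rw [hexp]
  rcases le_total r (1/2) with hhalf | hhalf
  · -- small r : integrand bounded by 2
    have hbound : ∀ θ : ℝ,
        ENNReal.ofReal (‖(r:ℂ) * Complex.exp (θ * Complex.I) - Complex.exp ((φ:ℝ) * Complex.I)‖ ^ (-α))
          ≤ ENNReal.ofReal 2 := by
      intro θ
      apply ENNReal.ofReal_le_ofReal
      have h2 := circ_normSq r θ φ
      have hN := norm_nonneg ((r:ℂ) * Complex.exp (θ*Complex.I) - Complex.exp ((φ:ℝ)*Complex.I))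
      have hge : 1/2 ≤ ‖(r:ℂ) * Complex.exp (θ*Complex.I) - Complex.exp ((φ:ℝ)*Complex.I)‖ := by
        have hcos := Real.cos_le_one (θ - φ)
        nlinarith [sq_nonneg (‖(r:ℂ) * Complex.exp (θ*Complex.I) - Complex.exp ((φ:ℝ)*Complex.I)‖ - (1 - r))]
      calc ‖(r:ℂ) * Complex.exp (θ*Complex.I) - Complex.exp ((φ:ℝ)*Complex.I)‖ ^ (-α)
          ≤ (1/2 : ℝ) ^ (-α) := Real.rpow_le_rpow_of_nonpos (by norm_num) hge (by linarith)
        _ ≤ (1/2 : ℝ) ^ (-1 : ℝ) :=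
            Real.rpow_le_rpow_of_exponent_ge (by norm_num) (by norm_num) (by linarith)
        _ = 2 := by rw [Real.rpow_neg_one]; norm_num
    calc ∫⁻ θ in Ioc 0 (2*π), ENNReal.ofReal
          (‖(r:ℂ) * Complex.exp (θ * Complex.I) - Complex.exp ((φ:ℝ) * Complex.I)‖ ^ (-α))
        ≤ ∫⁻ _ in Ioc (0:ℝ) (2*π), ENNReal.ofReal 2 := lintegral_mono fun θ => hbound θ
      _ = ENNReal.ofReal 2 * volume (Ioc (0:ℝ) (2*π)) := setLIntegral_const _ _
      _ = ENNReal.ofReal 2 * ENNReal.ofReal (2*π) := by rw [Real.volume_Ioc, sub_zero]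
      _ ≤ _ := le_self_add
  · -- large r
    set F := fun u : ℝ => ENNReal.ofReal (|u| ^ (-α)) with hF
    have hmF : Measurable F := measurable_rpow_const_abs α (ne_of_gt hα0)
    have hae : ∀ᵐ θ : ℝ, θ ∈ Ioc 0 (2*π) →
        ENNReal.ofReal (‖(r:ℂ) * Complex.exp (θ * Complex.I) - Complex.exp ((φ:ℝ) * Complex.I)‖ ^ (-α))
          ≤ ENNReal.ofReal π * (F (θ - φ) + F (θ - (φ - 2*π)) + F (θ - (φ + 2*π))) := by
      have h1 : ∀ᵐ θ : ℝ, θ ≠ φ := by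
        refine (ae_iff).2 ?_; simpa using Real.volume_singleton
      have h2 : ∀ᵐ θ : ℝ, θ ≠ φ + 2*π := by
        refine (ae_iff).2 ?_; simpa using Real.volume_singleton
      have h3 : ∀ᵐ θ : ℝ, θ ≠ φ - 2*π := by
        refine (ae_iff).2 ?_; simpa using Real.volume_singleton
      filter_upwards [h1, h2, h3] with θ hθ1 hθ2 hθ3 hθI
      set u := θ - φ with hu
      have huabs : |u| ≤ 2*π := by
        rw [abs_le]; constructor <;> [linarith [hθI.1, hφ2]; linarith [hθI.2, hφ0]]
      set d := min |u| (min |u - 2*π| |u + 2*π|) with hd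
      have hd0 : 0 < d := by
        apply lt_min
        · exact abs_pos.2 (sub_ne_zero.2 hθ1)
        apply lt_min
        · exact abs_pos.2 (fun h => hθ2 (by rw [hu] at h; linarith))
        · exact abs_pos.2 (fun h => hθ3 (by rw [hu] at h; linarith))
      have hdist := circ_dist_ge_half hhalf hr1.le huabs
      have hrp : ‖(r:ℂ) * Complex.exp (θ * Complex.I) - Complex.exp ((φ:ℝ) * Complex.I)‖ ^ (-α)
          ≤ (d/π) ^ (-α) :=
        Real.rpow_le_rpow_of_nonpos (by positivity) hdist (by linarith)
      have hdp : (d/π) ^ (-α) = d ^ (-α) * π ^ (α:ℝ) := by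
        rw [Real.div_rpow hd0.le hπ.le, Real.rpow_neg hπ.le]
        field_simp
      have hπα : π ^ (α:ℝ) ≤ π := by
        calc π ^ (α:ℝ) ≤ π ^ (1:ℝ) :=
          Real.rpow_le_rpow_of_exponent_le (by linarith [Real.pi_gt_three]) (by linarith)
        _ = π := Real.rpow_one _
      have hdsum : d ^ (-α) ≤ |u| ^ (-α) + |u - 2*π| ^ (-α) + |u + 2*π| ^ (-α) := by
        have hnn1 : (0:ℝ) ≤ |u| ^ (-α) := Real.rpow_nonneg (abs_nonneg _) _
        have hnn2 : (0:ℝ) ≤ |u - 2*π| ^ (-α) := Real.rpow_nonneg (abs_nonneg _) _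
        have hnn3 : (0:ℝ) ≤ |u + 2*π| ^ (-α) := Real.rpow_nonneg (abs_nonneg _) _
        rcases min_cases |u| (min |u - 2*π| |u + 2*π|) with ⟨h,_⟩ | ⟨h,_⟩
        · rw [hd, h]; linarith
        · rcases min_cases |u - 2*π| |u + 2*π| with ⟨h',_⟩ | ⟨h',_⟩
          · rw [hd, h, h']; linarith
          · rw [hd, h, h']; linarith
      have hfinal : ‖(r:ℂ) * Complex.exp (θ * Complex.I) - Complex.exp ((φ:ℝ) * Complex.I)‖ ^ (-α)
          ≤ π * (|u| ^ (-α) + |u - 2*π| ^ (-α) + |u + 2*π| ^ (-α)) := by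
        calc ‖(r:ℂ) * Complex.exp (θ * Complex.I) - Complex.exp ((φ:ℝ) * Complex.I)‖ ^ (-α)
            ≤ (d/π) ^ (-α) := hrp
          _ = d ^ (-α) * π ^ (α:ℝ) := hdp
          _ ≤ d ^ (-α) * π := by
              exact mul_le_mul_of_nonneg_left hπα (Real.rpow_nonneg hd0.le _)
          _ ≤ (|u| ^ (-α) + |u - 2*π| ^ (-α) + |u + 2*π| ^ (-α)) * π := by
              exact mul_le_mul_of_nonneg_right hdsum hπ.le
          _ = π * (|u| ^ (-α) + |u - 2*π| ^ (-α) + |u + 2*π| ^ (-α)) := by ring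
      calc ENNReal.ofReal (‖(r:ℂ) * Complex.exp (θ * Complex.I) - Complex.exp ((φ:ℝ) * Complex.I)‖ ^ (-α))
          ≤ ENNReal.ofReal (π * (|u| ^ (-α) + |u - 2*π| ^ (-α) + |u + 2*π| ^ (-α))) :=
            ENNReal.ofReal_le_ofReal hfinal
        _ = ENNReal.ofReal π * (F (θ - φ) + F (θ - (φ - 2*π)) + F (θ - (φ + 2*π))) := by
            rw [ENNReal.ofReal_mul hπ.le, ENNReal.ofReal_add (by positivity) (by positivity),
              ENNReal.ofReal_add (by positivity) (by positivity)]
            have e1 : θ - (φ - 2*π) = u + 2*π := by rw [hu]; ring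
            have e2 : θ - (φ + 2*π) = u - 2*π := by rw [hu]; ring
            rw [hF]
            simp only [e1, e2]
            ring
    have hshift : ∀ c : ℝ, -(2*π) ≤ c → c ≤ 4*π →
        ∫⁻ θ in Ioc 0 (2*π), F (θ - c) ≤ K := by
      intro c hc1 hc2
      rw [lint_shift F 0 (2*π) c]
      rw [hK]
      apply lintegral_mono_set
      apply Ioc_subset_Ioc <;> linarith
    calc ∫⁻ θ in Ioc 0 (2*π), ENNReal.ofReal
          (‖(r:ℂ) * Complex.exp (θ * Complex.I) - Complex.exp ((φ:ℝ) * Complex.I)‖ ^ (-α))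
        ≤ ∫⁻ θ in Ioc 0 (2*π),
            ENNReal.ofReal π * (F (θ - φ) + F (θ - (φ - 2*π)) + F (θ - (φ + 2*π))) :=
          setLIntegral_mono_ae' measurableSet_Ioc hae
      _ = ENNReal.ofReal π * ∫⁻ θ in Ioc 0 (2*π),
            (F (θ - φ) + F (θ - (φ - 2*π)) + F (θ - (φ + 2*π))) :=
          lintegral_const_mul' _ _ ENNReal.ofReal_ne_top
      _ ≤ ENNReal.ofReal π * (K + K + K) := by
          apply mul_le_mul_right
          have m1 : Measurable fun θ : ℝ => F (θ - φ) :=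
            hmF.comp (measurable_id.sub measurable_const)
          have m2 : Measurable fun θ : ℝ => F (θ - (φ - 2*π)) :=
            hmF.comp (measurable_id.sub measurable_const)
          calc ∫⁻ θ in Ioc 0 (2*π), (F (θ - φ) + F (θ - (φ - 2*π)) + F (θ - (φ + 2*π)))
              = (∫⁻ θ in Ioc 0 (2*π), F (θ - φ))
                + (∫⁻ θ in Ioc 0 (2*π), F (θ - (φ - 2*π)))
                + (∫⁻ θ in Ioc 0 (2*π), F (θ - (φ + 2*π))) := by
                rw [lintegral_add_left (f := fun θ : ℝ => F (θ - φ) + F (θ - (φ - 2*π))) (m1.add m2),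
                  lintegral_add_left m1]
            _ ≤ K + K + K := by
                gcongr
                · exact hshift φ (by linarith) (by linarith)
                · exact hshift (φ - 2*π) (by linarith) (by linarith)
                · exact hshift (φ + 2*π) (by linarith) (by linarith)
      _ ≤ _ := le_add_self


lemma measurable_norm_rpow {f : ℝ → ℂ} (hf : Continuous f) {e : ℝ} (he : e ≠ 0) :
    Measurable fun θ => ENNReal.ofReal (‖f θ‖ ^ e) := by
  have h := measurable_rpow_const_abs (-e) (by simpa using he)
  have : (fun θ => ENNReal.ofReal (‖f θ‖ ^ e))
      = (fun u : ℝ => ENNReal.ofReal (|u| ^ (-(-e)))) ∘ (fun θ => ‖f θ‖) := by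
    funext θ
    simp [Function.comp, _root_.abs_of_nonneg (norm_nonneg (f θ)), neg_neg]
  rw [this]
  exact h.comp hf.norm.measurable

lemma sum_rpow_le (m : ℕ) (x : ℕ → ℝ) (hx : ∀ i, 0 ≤ x i) {β : ℝ} (hβ : 0 < β) :
    (∑ i ∈ Finset.range m, x i) ^ β ≤ ∑ i ∈ Finset.range m, ((m:ℝ) * x i) ^ β := by
  rcases Nat.eq_zero_or_pos m with hm | hm
  · subst hm; simp [Real.zero_rpow (ne_of_gt hβ)]
  · have hne : (Finset.range m).Nonempty := Finset.nonempty_range_iff.2 (by omega)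
    obtain ⟨i₀, hi₀mem, hi₀⟩ := Finset.exists_max_image (Finset.range m) x hne
    have hsum : (∑ i ∈ Finset.range m, x i) ≤ (m:ℝ) * x i₀ := by
      calc (∑ i ∈ Finset.range m, x i) ≤ ∑ _i ∈ Finset.range m, x i₀ :=
            Finset.sum_le_sum fun i hi => hi₀ i hi
        _ = (m:ℝ) * x i₀ := by rw [Finset.sum_const, Finset.card_range, nsmul_eq_mul]
    calc (∑ i ∈ Finset.range m, x i) ^ β ≤ ((m:ℝ) * x i₀) ^ β :=
          Real.rpow_le_rpow (Finset.sum_nonneg fun i _ => hx i) hsum hβ.le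
      _ ≤ ∑ i ∈ Finset.range m, ((m:ℝ) * x i) ^ β :=
          Finset.single_le_sum (fun i _ => Real.rpow_nonneg
            (mul_nonneg (Nat.cast_nonneg m) (hx i)) β) hi₀mem

lemma part1 {p : ℝ} (hp : 0 < p) (θn : ℕ → ℝ) (N : ℕ) (lam : ℕ → ℂ)
    {β : ℝ} (hβ0 : 0 < β) (hβp : β < p) :
    (⨆ r ∈ Ioo (0:ℝ) 1,
        hardyArcIntegral (fun z => ∑ n ∈ Finset.range (N + 1), lam n * gfun (1/p) (θn n) z)
          β 0 (2 * π) r) < ⊤ := by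
  set s : ℝ := 1/p with hs
  have hs0 : 0 < s := by positivity
  set α : ℝ := β * s with hα
  have hα0 : 0 < α := by positivity
  have hα1 : α < 1 := by
    rw [hα, hs]
    rw [mul_one_div, div_lt_one hp]
    exact hβp
  obtain ⟨M, hMt, hM⟩ := lemmaA hα0 hα1
  set B : ℝ≥0∞ := ∑ n ∈ Finset.range (N + 1),
    ENNReal.ofReal ((((N:ℝ)+1) * ‖lam n‖) ^ β) * M with hB
  have hBt : B < ⊤ := by
    rw [hB]
    refine ENNReal.sum_lt_top.2 fun n _ => ?_
    exact ENNReal.mul_lt_top ENNReal.ofReal_lt_top hMt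
  refine lt_of_le_of_lt (iSup₂_le fun r hr => ?_) hBt
  obtain ⟨hr0, hr1⟩ := hr
  -- pointwise bound
  have hzn : ∀ θ : ℝ, ‖(r:ℂ) * Complex.exp (θ * Complex.I)‖ < 1 := by
    intro θ
    rw [norm_mul, Complex.norm_real, Real.norm_eq_abs, _root_.abs_of_pos hr0,
      Complex.norm_exp_ofReal_mul_I, mul_one]
    exact hr1
  have hpt : ∀ θ : ℝ,
      ENNReal.ofReal (‖∑ n ∈ Finset.range (N + 1),
          lam n * gfun s (θn n) ((r:ℂ) * Complex.exp (θ * Complex.I))‖ ^ β)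
        ≤ ∑ n ∈ Finset.range (N + 1),
            ENNReal.ofReal ((((N:ℝ)+1) * ‖lam n‖) ^ β)
              * ENNReal.ofReal
                (‖(r:ℂ) * Complex.exp (θ * Complex.I) - Complex.exp ((θn n) * Complex.I)‖ ^ (-α)) := by
    intro θ
    set z := (r:ℂ) * Complex.exp (θ * Complex.I) with hz
    have hz1 : ‖z‖ < 1 := hzn θ
    have step1 : ‖∑ n ∈ Finset.range (N + 1), lam n * gfun s (θn n) z‖ ^ β
        ≤ ∑ n ∈ Finset.range (N + 1), (((N:ℝ)+1) * ‖lam n * gfun s (θn n) z‖) ^ β := by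
      calc ‖∑ n ∈ Finset.range (N + 1), lam n * gfun s (θn n) z‖ ^ β
          ≤ (∑ n ∈ Finset.range (N + 1), ‖lam n * gfun s (θn n) z‖) ^ β :=
            Real.rpow_le_rpow (norm_nonneg _) (norm_sum_le _ _) hβ0.le
        _ ≤ ∑ n ∈ Finset.range (N + 1), (((N:ℝ)+1) * ‖lam n * gfun s (θn n) z‖) ^ β := by
            have := sum_rpow_le (N+1) (fun n => ‖lam n * gfun s (θn n) z‖)
              (fun i => norm_nonneg _) hβ0
            simpa using this
    have step2 : ∀ n, (((N:ℝ)+1) * ‖lam n * gfun s (θn n) z‖) ^ β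
        = ((((N:ℝ)+1) * ‖lam n‖) ^ β)
          * (‖z - Complex.exp ((θn n) * Complex.I)‖ ^ (-α)) := by
      intro n
      rw [norm_mul, gfun_norm s (θn n) hz1]
      rw [show ((N:ℝ)+1) * (‖lam n‖ * ‖z - Complex.exp ((θn n) * Complex.I)‖ ^ (-s))
          = (((N:ℝ)+1) * ‖lam n‖) * ‖z - Complex.exp ((θn n) * Complex.I)‖ ^ (-s) by ring]
      rw [Real.mul_rpow (by positivity) (Real.rpow_nonneg (norm_nonneg _) _)]
      congr 1
      rw [← Real.rpow_mul (norm_nonneg _)]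
      congr 1
      rw [hα]; ring
    calc ENNReal.ofReal (‖∑ n ∈ Finset.range (N + 1), lam n * gfun s (θn n) z‖ ^ β)
        ≤ ENNReal.ofReal (∑ n ∈ Finset.range (N + 1),
            (((N:ℝ)+1) * ‖lam n * gfun s (θn n) z‖) ^ β) := ENNReal.ofReal_le_ofReal step1
      _ = ∑ n ∈ Finset.range (N + 1),
            ENNReal.ofReal ((((N:ℝ)+1) * ‖lam n * gfun s (θn n) z‖) ^ β) :=
          ENNReal.ofReal_sum_of_nonneg fun n _ => Real.rpow_nonneg
            (mul_nonneg (by positivity) (norm_nonneg _)) _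
      _ = ∑ n ∈ Finset.range (N + 1),
            ENNReal.ofReal ((((N:ℝ)+1) * ‖lam n‖) ^ β)
              * ENNReal.ofReal (‖z - Complex.exp ((θn n) * Complex.I)‖ ^ (-α)) := by
          refine Finset.sum_congr rfl fun n _ => ?_
          rw [step2 n, ENNReal.ofReal_mul (Real.rpow_nonneg (by positivity) _)]
  -- now integrate
  have hmeas : ∀ n : ℕ, Measurable fun θ : ℝ =>
      ENNReal.ofReal (‖(r:ℂ) * Complex.exp (θ * Complex.I) - Complex.exp ((θn n) * Complex.I)‖ ^ (-α)) := by
    intro n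
    apply measurable_norm_rpow
    · exact (continuous_const.mul
        (Complex.continuous_exp.comp ((Complex.continuous_ofReal).mul continuous_const))).sub
        continuous_const
    · exact ne_of_lt (neg_lt_zero.2 hα0)
  calc hardyArcIntegral (fun z => ∑ n ∈ Finset.range (N + 1), lam n * gfun (1/p) (θn n) z)
        β 0 (2 * π) r
      = ∫⁻ θ in Ioc 0 (2*π), ENNReal.ofReal
          (‖∑ n ∈ Finset.range (N + 1),
            lam n * gfun s (θn n) ((r:ℂ) * Complex.exp (θ * Complex.I))‖ ^ β) := rfl
    _ ≤ ∫⁻ θ in Ioc 0 (2*π), ∑ n ∈ Finset.range (N + 1),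
          ENNReal.ofReal ((((N:ℝ)+1) * ‖lam n‖) ^ β)
            * ENNReal.ofReal
              (‖(r:ℂ) * Complex.exp (θ * Complex.I) - Complex.exp ((θn n) * Complex.I)‖ ^ (-α)) :=
        lintegral_mono fun θ => hpt θ
    _ = ∑ n ∈ Finset.range (N + 1), ∫⁻ θ in Ioc 0 (2*π),
          ENNReal.ofReal ((((N:ℝ)+1) * ‖lam n‖) ^ β)
            * ENNReal.ofReal
              (‖(r:ℂ) * Complex.exp (θ * Complex.I) - Complex.exp ((θn n) * Complex.I)‖ ^ (-α)) :=
        lintegral_finset_sum _ fun n _ => (hmeas n).const_mul _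
    _ = ∑ n ∈ Finset.range (N + 1), ENNReal.ofReal ((((N:ℝ)+1) * ‖lam n‖) ^ β)
          * ∫⁻ θ in Ioc 0 (2*π), ENNReal.ofReal
              (‖(r:ℂ) * Complex.exp (θ * Complex.I) - Complex.exp ((θn n) * Complex.I)‖ ^ (-α)) :=
        Finset.sum_congr rfl fun n _ => lintegral_const_mul' _ _ ENNReal.ofReal_ne_top
    _ ≤ B := by
        rw [hB]
        exact Finset.sum_le_sum fun n _ =>
          mul_le_mul_right (hM (θn n) r hr0.le hr1) _

lemma circ_dist_ge_of_gap {r θ θ₀ δ : ℝ} (hr0 : 0 ≤ r) (hr1 : r ≤ 1)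
    (hδ0 : 0 < δ) (hδ1 : δ ≤ 1) (hd1 : δ ≤ |θ - θ₀|) (hd2 : |θ - θ₀| ≤ 1) :
    min (1/2) (δ/π) ≤ ‖(r:ℂ) * Complex.exp (θ*Complex.I) - Complex.exp (θ₀*Complex.I)‖ := by
  have hπ := Real.pi_pos
  have hπ3 := Real.pi_gt_three
  have hnormsq := circ_normSq r θ θ₀
  have hN := norm_nonneg ((r:ℂ) * Complex.exp (θ*Complex.I) - Complex.exp (θ₀*Complex.I))
  have hcos1 : Real.cos (θ - θ₀) ≤ Real.cos δ := by
    rw [← Real.cos_abs]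
    exact Real.cos_le_cos_of_nonneg_of_le_pi hδ0.le (by linarith) hd1
  have hcos2 : Real.cos δ ≤ 1 - 2/π^2 * δ^2 := by
    apply Real.cos_le_one_sub_mul_cos_sq
    rw [_root_.abs_of_pos hδ0]; linarith
  set D := ‖(r:ℂ) * Complex.exp (θ*Complex.I) - Complex.exp (θ₀*Complex.I)‖ with hD
  have hm2 : (min (1/2) (δ/π))^2 ≤ D^2 := by
    rw [hnormsq]
    rcases le_total r (1/2) with hhalf | hhalf
    · have h1 : min (1/2) (δ/π) ≤ 1/2 := min_le_left _ _
      have h0 : 0 ≤ min (1/2) (δ/π) := le_min (by norm_num) (by positivity)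
      have hc0 : 0 ≤ 1 - Real.cos (θ - θ₀) := by linarith [Real.cos_le_one (θ - θ₀)]
      have hsq : (min (1/2) (δ/π))^2 ≤ (1-r)^2 := by nlinarith
      nlinarith [mul_nonneg (mul_nonneg (by norm_num : (0:ℝ) ≤ 2) hr0) hc0]
    · have h1 : min (1/2) (δ/π) ≤ δ/π := min_le_right _ _
      have h0 : 0 ≤ min (1/2) (δ/π) := le_min (by norm_num) (by positivity)
      have h2 : (δ/π)^2 ≤ 2*r*(1 - Real.cos (θ - θ₀)) := by
        rw [div_pow]
        have hδπ : δ^2/π^2 ≤ 2/π^2 * δ^2 := by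
          have he : δ^2/π^2 = 1/π^2 * δ^2 := by ring
          rw [he]
          exact mul_le_mul_of_nonneg_right
            ((div_le_div_iff_of_pos_right (by positivity)).2 one_le_two) (sq_nonneg δ)
        have hc0 : 0 ≤ 1 - Real.cos (θ - θ₀) := by linarith [Real.cos_le_one (θ - θ₀)]
        have hkey : 1 - Real.cos (θ - θ₀) ≤ 2*r*(1 - Real.cos (θ - θ₀)) := by
          nlinarith [mul_nonneg (by linarith : (0:ℝ) ≤ 2*r - 1) hc0]
        nlinarith
      nlinarith [sq_nonneg (1-r), sq_nonneg (min (1/2) (δ/π))]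
  nlinarith [le_min (by norm_num : (0:ℝ) ≤ 1/2) (by positivity : (0:ℝ) ≤ δ/π)]

set_option maxHeartbeats 1000000 in
lemma part2 {p q : ℝ} (hp : 0 < p) (hpq : p ≤ q) {a b : ℝ}
    (θn : ℕ → ℝ) (N : ℕ) (lam : ℕ → ℂ) (hlam : lam N ≠ 0)
    {ε₀ δ : ℝ} (hε₀ : 0 < ε₀) (hδ0 : 0 < δ) (hδ1 : δ ≤ 1)
    (hsub : Ioc (θn N) (θn N + ε₀) ⊆ Ioc a b)
    (hgap : ∀ n < N, ∀ θ ∈ Ioc (θn N) (θn N + ε₀), δ ≤ |θ - θn n| ∧ |θ - θn n| ≤ 1) :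
    (⨆ r ∈ Ioo (0:ℝ) 1,
        hardyArcIntegral (fun z => ∑ n ∈ Finset.range (N + 1), lam n * gfun (1/p) (θn n) z)
          q a b r) = ⊤ := by
  have hπ := Real.pi_pos
  have hπ3 := Real.pi_gt_three
  set s : ℝ := 1/p with hs
  have hs0 : 0 < s := by positivity
  have hq0 : 0 < q := lt_of_lt_of_le hp hpq
  have hsq1 : 1 ≤ s * q := by
    rw [hs, one_div, inv_mul_eq_div, le_div_iff₀ hp, one_mul]
    exact hpq
  set lam0 : ℝ := ‖lam N‖ with hlam0
  have hlampos : 0 < lam0 := norm_pos_iff.2 hlam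
  set δ₀ : ℝ := min (1/2) (δ/π) with hδ₀def
  have hδ₀ : 0 < δ₀ := lt_min (by norm_num) (by positivity)
  set C₁ : ℝ := δ₀ ^ (-s) with hC₁
  have hC₁0 : 0 ≤ C₁ := Real.rpow_nonneg hδ₀.le _
  set C : ℝ := ∑ n ∈ Finset.range N, ‖lam n‖ * C₁ with hC
  have hC0 : 0 ≤ C := Finset.sum_nonneg fun n _ => mul_nonneg (norm_nonneg _) hC₁0
  set Y : ℝ := max (2*C/lam0) 1 with hY
  have hY1 : 1 ≤ Y := le_max_right _ _
  have hY0 : 0 < Y := lt_of_lt_of_le one_pos hY1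
  set t₁ : ℝ := Y ^ (-(1/s)) / 2 with ht₁def
  have ht₁ : 0 < t₁ := div_pos (Real.rpow_pos_of_pos hY0 _) two_pos
  set ε' : ℝ := min ε₀ (min (1/2) t₁) with hε'def
  have hε' : 0 < ε' := lt_min hε₀ (lt_min (by norm_num) ht₁)
  have hε'h : ε' ≤ 1/2 := le_trans (min_le_right _ _) (min_le_left _ _)
  have hε'ε₀ : ε' ≤ ε₀ := min_le_left _ _
  have hε't₁ : ε' ≤ t₁ := le_trans (min_le_right _ _) (min_le_right _ _)
  set c : ℝ := (lam0/2) ^ q with hcdef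
  have hc : 0 < c := Real.rpow_pos_of_pos (by positivity) _
  -- pointwise lower bound
  have hpt : ∀ r : ℝ, 0 < r → r < 1 → ∀ θ ∈ Ioc (θn N + (1-r)) (θn N + ε'),
      ENNReal.ofReal (c * (2*(θ - θn N))⁻¹)
        ≤ ENNReal.ofReal (‖∑ n ∈ Finset.range (N + 1),
            lam n * gfun s (θn n) ((r:ℂ) * Complex.exp (θ * Complex.I))‖ ^ q) := by
    intro r hr0 hr1 θ hθ
    set z := (r:ℂ) * Complex.exp (θ * Complex.I) with hzdef
    have hz1 : ‖z‖ < 1 := by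
      rw [hzdef, norm_mul, Complex.norm_real, Real.norm_eq_abs, _root_.abs_of_pos hr0,
        Complex.norm_exp_ofReal_mul_I, mul_one]
      exact hr1
    set t : ℝ := θ - θn N with htdef
    have ht0 : 1 - r ≤ t := by rw [htdef]; linarith [hθ.1]
    have htpos : 0 < t := lt_of_lt_of_le (by linarith) ht0
    have ht1 : t ≤ ε' := by rw [htdef]; linarith [hθ.2]
    have hθwin : θ ∈ Ioc (θn N) (θn N + ε₀) :=
      ⟨by linarith [hθ.1], by linarith [hθ.2]⟩
    -- bound for n < N
    have hsmall : ∀ n, n < N → ‖gfun s (θn n) z‖ ≤ C₁ := by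
      intro n hn
      obtain ⟨hd1, hd2⟩ := hgap n hn θ hθwin
      have hdistge : δ₀ ≤ ‖z - Complex.exp ((θn n) * Complex.I)‖ := by
        rw [hzdef, hδ₀def]
        exact circ_dist_ge_of_gap hr0.le hr1.le hδ0 hδ1 hd1 hd2
      rw [gfun_norm s (θn n) hz1, hC₁]
      exact Real.rpow_le_rpow_of_nonpos hδ₀ hdistge (by linarith)
    -- remainder bound
    have hrem : ‖∑ n ∈ Finset.range N, lam n * gfun s (θn n) z‖ ≤ C := by
      calc ‖∑ n ∈ Finset.range N, lam n * gfun s (θn n) z‖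
          ≤ ∑ n ∈ Finset.range N, ‖lam n * gfun s (θn n) z‖ := norm_sum_le _ _
        _ ≤ C := by
            rw [hC]
            refine Finset.sum_le_sum fun n hn => ?_
            rw [norm_mul]
            exact mul_le_mul_of_nonneg_left (hsmall n (Finset.mem_range.1 hn)) (norm_nonneg _)
    -- main term lower bound
    have hzζ : z ≠ Complex.exp ((θn N) * Complex.I) := by
      intro h
      rw [h, Complex.norm_exp_ofReal_mul_I] at hz1
      linarith
    have hdN : 0 < ‖z - Complex.exp ((θn N) * Complex.I)‖ :=
      norm_pos_iff.2 (sub_ne_zero.2 hzζ)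
    have hdNle : ‖z - Complex.exp ((θn N) * Complex.I)‖ ≤ 2*t := by
      have := circ_dist_le r θ (θn N) hr1.le
      rw [← hzdef] at this
      calc ‖z - Complex.exp ((θn N) * Complex.I)‖ ≤ (1-r) + |θ - θn N| := this
        _ = (1-r) + t := by rw [← htdef, _root_.abs_of_pos htpos]
        _ ≤ 2*t := by linarith
    have hgN : (2*t) ^ (-s) ≤ ‖gfun s (θn N) z‖ := by
      rw [gfun_norm s (θn N) hz1]
      exact Real.rpow_le_rpow_of_nonpos hdN hdNle (by linarith)
    -- (2t)^{-s} ≥ Y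
    have hYle : Y ≤ (2*t) ^ (-s) := by
      have h2t : 2*t ≤ Y ^ (-(1/s)) := by
        calc 2*t ≤ 2*ε' := by linarith
          _ ≤ 2*t₁ := by linarith
          _ = Y ^ (-(1/s)) := by rw [ht₁def]; ring
      calc Y = Y ^ (1:ℝ) := (Real.rpow_one _).symm
        _ = Y ^ ((-(1/s)) * (-s)) := by
            congr 1
            field_simp
        _ = (Y ^ (-(1/s))) ^ (-s) := Real.rpow_mul hY0.le _ _
        _ ≤ (2*t) ^ (-s) :=
            Real.rpow_le_rpow_of_nonpos (by positivity) h2t (by linarith)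
    -- assemble
    have hLlow : (lam0/2) * (2*t) ^ (-s)
        ≤ ‖∑ n ∈ Finset.range (N + 1), lam n * gfun s (θn n) z‖ := by
      rw [Finset.sum_range_succ]
      have hlow : ‖lam N * gfun s (θn N) z‖ - ‖∑ n ∈ Finset.range N, lam n * gfun s (θn n) z‖
          ≤ ‖(∑ n ∈ Finset.range N, lam n * gfun s (θn n) z) + lam N * gfun s (θn N) z‖ := by
        have h := norm_sub_norm_le (lam N * gfun s (θn N) z)
          (-(∑ n ∈ Finset.range N, lam n * gfun s (θn n) z))
        rw [norm_neg, sub_neg_eq_add] at h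
        calc ‖lam N * gfun s (θn N) z‖ - ‖∑ n ∈ Finset.range N, lam n * gfun s (θn n) z‖
            ≤ ‖lam N * gfun s (θn N) z + ∑ n ∈ Finset.range N, lam n * gfun s (θn n) z‖ := h
          _ = ‖(∑ n ∈ Finset.range N, lam n * gfun s (θn n) z) + lam N * gfun s (θn N) z‖ := by
              rw [add_comm]
      have hmain : lam0 * ((2*t) ^ (-s)) ≤ ‖lam N * gfun s (θn N) z‖ := by
        rw [norm_mul, ← hlam0]
        exact mul_le_mul_of_nonneg_left hgN hlampos.le
      have hCle : C ≤ (lam0/2) * (2*t) ^ (-s) := by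
        have h2C : 2*C/lam0 ≤ Y := le_max_left _ _
        have : 2*C/lam0 ≤ (2*t) ^ (-s) := le_trans h2C hYle
        rw [div_le_iff₀ hlampos] at this
        linarith
      linarith
    -- raise to power q
    apply ENNReal.ofReal_le_ofReal
    have hbase : 0 ≤ (lam0/2) * (2*t) ^ (-s) := by positivity
    calc c * (2*(θ - θn N))⁻¹ = c * (2*t)⁻¹ := by rw [← htdef]
      _ = (lam0/2)^q * (2*t) ^ (-1 : ℝ) := by rw [hcdef, Real.rpow_neg_one]
      _ ≤ (lam0/2)^q * (2*t) ^ (-(s*q)) := by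
          apply mul_le_mul_of_nonneg_left _ (Real.rpow_nonneg (by positivity) _)
          exact Real.rpow_le_rpow_of_exponent_ge (by positivity) (by linarith) (by linarith)
      _ = ((lam0/2) * (2*t) ^ (-s)) ^ q := by
          rw [Real.mul_rpow (by positivity) (Real.rpow_nonneg (by positivity) _)]
          congr 1
          rw [show -(s*q) = (-s)*q by ring, Real.rpow_mul (by positivity)]
      _ ≤ ‖∑ n ∈ Finset.range (N + 1), lam n * gfun s (θn n) z‖ ^ q :=
          Real.rpow_le_rpow hbase hLlow hq0.le
  -- integral of minorant
  have hint : ∀ u : ℝ, 0 < u → u ≤ ε' →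
      ∫⁻ θ in Ioc (θn N + u) (θn N + ε'), ENNReal.ofReal (c * (2*(θ - θn N))⁻¹)
        = ENNReal.ofReal (c/2 * Real.log (ε'/u)) := by
    intro u hu huε
    have hcont : ContinuousOn (fun θ : ℝ => c * (2*(θ - θn N))⁻¹)
        (Icc (θn N + u) (θn N + ε')) := by
      apply ContinuousOn.mul continuousOn_const
      apply ContinuousOn.inv₀
      · exact (continuousOn_const.mul ((continuousOn_id).sub continuousOn_const))
      · intro θ hθ
        have h1 : 0 < 2*(θ - θn N) := by linarith [hθ.1]
        exact ne_of_gt h1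
    have hIng : IntegrableOn (fun θ : ℝ => c * (2*(θ - θn N))⁻¹)
        (Ioc (θn N + u) (θn N + ε')) volume :=
      (hcont.integrableOn_Icc).mono_set Ioc_subset_Icc_self
    have hnn : 0 ≤ᵐ[volume.restrict (Ioc (θn N + u) (θn N + ε'))]
        fun θ : ℝ => c * (2*(θ - θn N))⁻¹ :=
      (ae_restrict_iff' measurableSet_Ioc).2 (ae_of_all _ fun θ hθ => by
        have h1 : 0 < θ - θn N := by linarith [hθ.1]
        positivity)
    rw [← ofReal_integral_eq_lintegral_ofReal hIng hnn]
    congr 1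
    have hle : θn N + u ≤ θn N + ε' := by linarith
    rw [← intervalIntegral.integral_of_le hle]
    have hcomp : (∫ θ in (θn N + u)..(θn N + ε'), c * (2*(θ - θn N))⁻¹)
        = ∫ x in u..ε', c * (2*x)⁻¹ := by
      have := intervalIntegral.integral_comp_sub_right (a := θn N + u) (b := θn N + ε')
        (fun x : ℝ => c * (2*x)⁻¹) (θn N)
      rw [add_sub_cancel_left, add_sub_cancel_left] at this
      exact this
    rw [hcomp]
    have : (fun x : ℝ => c * (2*x)⁻¹) = fun x : ℝ => (c/2) * x⁻¹ := by
      funext x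
      rw [mul_inv]
      ring
    rw [this, intervalIntegral.integral_const_mul, integral_inv_of_pos hu (lt_of_lt_of_le hu huε)]
  -- conclude
  apply ENNReal.eq_top_of_forall_nnreal_le
  intro x
  obtain ⟨k, hk⟩ := exists_nat_ge ((x:ℝ) / (c/2))
  set u : ℝ := ε' * Real.exp (-(k:ℝ)) with hudef
  have hu0 : 0 < u := by positivity
  have huε : u ≤ ε' := by
    rw [hudef]
    exact mul_le_of_le_one_right hε'.le (Real.exp_le_one_iff.2 (neg_nonpos.2 (Nat.cast_nonneg k)))
  set r : ℝ := 1 - u with hrdef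
  have hr0 : 0 < r := by rw [hrdef]; linarith
  have hr1 : r < 1 := by rw [hrdef]; linarith
  have hlog : Real.log (ε'/u) = (k:ℝ) := by
    rw [hudef, Real.exp_neg]
    rw [show ε' / (ε' * (Real.exp (k:ℝ))⁻¹) = Real.exp (k:ℝ) by
      field_simp]
    exact Real.log_exp _
  have hval : ENNReal.ofReal (c/2 * (k:ℝ))
      ≤ hardyArcIntegral (fun z => ∑ n ∈ Finset.range (N + 1), lam n * gfun (1/p) (θn n) z)
          q a b r := by
    have h1u : 1 - r = u := by rw [hrdef]; ring
    calc ENNReal.ofReal (c/2 * (k:ℝ))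
        = ∫⁻ θ in Ioc (θn N + u) (θn N + ε'), ENNReal.ofReal (c * (2*(θ - θn N))⁻¹) := by
          rw [hint u hu0 huε, hlog]
      _ ≤ ∫⁻ θ in Ioc (θn N + u) (θn N + ε'), ENNReal.ofReal
            (‖∑ n ∈ Finset.range (N + 1),
              lam n * gfun s (θn n) ((r:ℂ) * Complex.exp (θ * Complex.I))‖ ^ q) := by
          refine setLIntegral_mono_ae' measurableSet_Ioc (ae_of_all _ fun θ hθmem => ?_)
          exact hpt r hr0 hr1 θ (by rw [h1u]; exact hθmem)
      _ ≤ ∫⁻ θ in Ioc a b, ENNReal.ofReal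
            (‖∑ n ∈ Finset.range (N + 1),
              lam n * gfun s (θn n) ((r:ℂ) * Complex.exp (θ * Complex.I))‖ ^ q) := by
          apply lintegral_mono_set
          refine subset_trans (Ioc_subset_Ioc (by linarith) (by linarith)) hsub
      _ = hardyArcIntegral (fun z => ∑ n ∈ Finset.range (N + 1), lam n * gfun (1/p) (θn n) z)
            q a b r := rfl
  calc (x : ℝ≥0∞) = ENNReal.ofReal (x:ℝ) := (ENNReal.ofReal_coe_nnreal (p := x)).symm
    _ ≤ ENNReal.ofReal (c/2 * (k:ℝ)) := by
        apply ENNReal.ofReal_le_ofReal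
        rw [div_le_iff₀ (by positivity : (0:ℝ) < c/2)] at hk
        linarith [hk]
    _ ≤ hardyArcIntegral (fun z => ∑ n ∈ Finset.range (N + 1), lam n * gfun (1/p) (θn n) z)
          q a b r := hval
    _ ≤ ⨆ r ∈ Ioo (0:ℝ) 1,
          hardyArcIntegral (fun z => ∑ n ∈ Finset.range (N + 1), lam n * gfun (1/p) (θn n) z)
            q a b r := le_iSup₂ (f := fun r _ =>
          hardyArcIntegral (fun z => ∑ n ∈ Finset.range (N + 1), lam n * gfun (1/p) (θn n) z)
            q a b r) r ⟨hr0, hr1⟩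

/-- Let `0 < p ≤ q < ∞` and `a < b`. There is a sequence of functions
`g n`, holomorphic on the open unit disc, such that every finite linear combination
`L = λ₀ g 0 + ⋯ + λ_N g N` with `λ_N ≠ 0` belongs to `H^β` for every `0 < β < p` and
does not belong to the localized Hardy space `H^q_{[a,b]}(D)`. -/
theorem lineability_inter_Hbeta_minus_localized_Hq (p q a b : ℝ)
    (hp : 0 < p) (hpq : p ≤ q) (hab : a < b) :
    ∃ g : ℕ → ℂ → ℂ,
      (∀ n, DifferentiableOn ℂ (g n) (Metric.ball (0 : ℂ) 1)) ∧
      ∀ (N : ℕ) (lam : ℕ → ℂ), lam N ≠ 0 →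
        (∀ β : ℝ, 0 < β → β < p →
          (⨆ r ∈ Ioo (0 : ℝ) 1,
              hardyArcIntegral (fun z => ∑ n ∈ Finset.range (N + 1), lam n * g n z)
                β 0 (2 * π) r) < ⊤) ∧
        (⨆ r ∈ Ioo (0 : ℝ) 1,
            hardyArcIntegral (fun z => ∑ n ∈ Finset.range (N + 1), lam n * g n z)
              q a b r) = ⊤ := by
  set len : ℝ := min (b - a) 1 with hlendef
  have hlen0 : 0 < len := lt_min (by linarith) one_pos
  have hlenba : len ≤ b - a := min_le_left _ _
  have hlen1 : len ≤ 1 := min_le_right _ _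
  set θn : ℕ → ℝ := fun n => a + len/4 + len/((n:ℝ)+3) with hθn
  refine ⟨fun n => gfun (1/p) (θn n), fun n => gfun_diff _ _, ?_⟩
  intro N lam hlam
  constructor
  · intro β hβ0 hβp
    exact part1 hp θn N lam hβ0 hβp
  · set δv : ℝ := len/(2*(((N:ℝ)+2)*((N:ℝ)+3))) with hδv
    have hN0 : (0:ℝ) ≤ (N:ℝ) := Nat.cast_nonneg N
    have hδv0 : 0 < δv := div_pos hlen0 (by nlinarith)
    have h12 : (12:ℝ) ≤ 2*(((N:ℝ)+2)*((N:ℝ)+3)) := by nlinarith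
    have hδv12 : δv ≤ len/12 :=
      div_le_div_of_nonneg_left hlen0.le (by norm_num) h12
    have hδv1 : δv ≤ 1 := by
      have : len/12 ≤ 1 := by rw [div_le_one (by norm_num)]; linarith
      linarith
    have hθN3 : len/((N:ℝ)+3) ≤ len/3 :=
      div_le_div_of_nonneg_left hlen0.le (by norm_num) (by linarith)
    have hsub : Ioc (θn N) (θn N + δv) ⊆ Ioc a b := by
      apply Ioc_subset_Ioc
      · rw [hθn]
        have h4 : 0 < len/4 := div_pos hlen0 (by norm_num)
        have hN3' : 0 < len/((N:ℝ)+3) := div_pos hlen0 (by positivity)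
        simp only []
        linarith
      · rw [hθn]
        simp only []
        linarith
    have hgap : ∀ n < N, ∀ θ ∈ Ioc (θn N) (θn N + δv), δv ≤ |θ - θn n| ∧ |θ - θn n| ≤ 1 := by
      intro n hn θ hθ
      have hcast : (n:ℝ) + 3 ≤ (N:ℝ) + 2 := by
        have := Nat.cast_le (α := ℝ).2 (Nat.succ_le_of_lt hn)
        push_cast at this
        linarith
      have hposn : (0:ℝ) < (n:ℝ)+3 := by positivity
      have hfrac : 1/((N:ℝ)+2) ≤ 1/((n:ℝ)+3) := one_div_le_one_div_of_le hposn hcast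
      have hdiffeq : θn n - θn N = len/((n:ℝ)+3) - len/((N:ℝ)+3) := by
        rw [hθn]; ring
      have h2δ : 2*δv = len*(1/((N:ℝ)+2) - 1/((N:ℝ)+3)) := by
        rw [hδv]
        field_simp
        ring
      have hdiff : 2*δv ≤ θn n - θn N := by
        rw [hdiffeq, h2δ]
        have hmul := mul_le_mul_of_nonneg_left
          (by linarith : 1/((N:ℝ)+2) - 1/((N:ℝ)+3) ≤ 1/((n:ℝ)+3) - 1/((N:ℝ)+3)) hlen0.le
        calc len*(1/((N:ℝ)+2) - 1/((N:ℝ)+3)) ≤ len*(1/((n:ℝ)+3) - 1/((N:ℝ)+3)) := hmul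
          _ = len/((n:ℝ)+3) - len/((N:ℝ)+3) := by ring
      have hθ1 := hθ.1
      have hθ2 := hθ.2
      have hlt : θ < θn n := by linarith
      have habs : |θ - θn n| = θn n - θ := by
        rw [abs_of_neg (by linarith)]; ring
      constructor
      · rw [habs]; linarith
      · rw [habs]
        have hn3 : len/((n:ℝ)+3) ≤ len/3 :=
          div_le_div_of_nonneg_left hlen0.le (by norm_num) (by linarith)
        have hpos : 0 < len/((N:ℝ)+3) := div_pos hlen0 (by positivity)
        simp only [hθn] at hθ1 ⊢
        linarith
    exact part2 hp hpq θn N lam hlam hδv0 hδv0 hδv1 hsub hgap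
end
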